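/- arXiv:2003.11537 — 9 statements merged into one kernel-verified Lean document; each statement's English description precedes it below -/
import Mathlib

section
/- Let (Y, ψ) be integrable real random variables on a common probability space satisfying E[Y | σ(ψ)] = ψ almost surely. Let κ be a regular conditional distribution of Y given ψ, and for τ ∈ (0,1) and u ∈ ℝ let F⁻¹_{Y|ψ}(τ | u) = inf{x ∈ ℝ : κ(u)((−∞, x]) ≥ τ} be the conditional quantile function. Assume that for every τ ∈ (0,1) the map u ↦ F⁻¹_{Y|ψ}(τ | u) is continuous, and that Δ(y₀) = 0 for some y₀ in the interior of the support of the distribution of ψ. Then the conditional distribution of Y given ψ = y₀ is degenerate at y₀: κ(y₀)({y₀}) = 1. -/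
open MeasureTheory ProbabilityTheory
open Set Filter Topology
open scoped ENNReal

/-- The topological support of a measure on ℝ: points whose every neighborhood has
positive measure. -/
def measSupport (μ : Measure ℝ) : Set ℝ := {x : ℝ | ∀ U ∈ nhds x, 0 < μ U}

/-- The conditional quantile function `F⁻¹_{Y|ψ}(τ | u)` associated with a Markov kernel `κ`
giving the conditional distribution of `Y` given `ψ = u`. -/
noncomputable def condQuantile (κ : Kernel ℝ ℝ) (τ : ℝ) (u : ℝ) : ℝ :=
  sInf {x : ℝ | τ ≤ (κ u (Set.Iic x)).toReal}

section QuantAux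

variable (κ : Kernel ℝ ℝ) [IsMarkovKernel κ]

lemma quantSet_nonempty (u : ℝ) {τ : ℝ} (hτ : τ < 1) :
    {x : ℝ | τ ≤ (κ u (Set.Iic x)).toReal}.Nonempty := by
  have h := tendsto_measure_Iic_atTop (κ u)
  rw [measure_univ] at h
  have h2 : Tendsto (fun x => (κ u (Set.Iic x)).toReal) atTop (𝓝 (1 : ℝ)) := by
    have := (ENNReal.tendsto_toReal (by norm_num : (1:ℝ≥0∞) ≠ ⊤)).comp h
    simpa [Function.comp_def] using this
  obtain ⟨x, hx⟩ := (h2.eventually (eventually_ge_nhds hτ)).exists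
  exact ⟨x, hx⟩

lemma quantSet_bddBelow (u : ℝ) {τ : ℝ} (hτ : 0 < τ) :
    BddBelow {x : ℝ | τ ≤ (κ u (Set.Iic x)).toReal} := by
  have h : Tendsto (fun x : ℝ => κ u (Set.Iic x)) atBot (𝓝 (κ u (⋂ x : ℝ, Set.Iic x))) := by
    have := tendsto_measure_iInter_atBot (μ := κ u) (s := fun x : ℝ => Set.Iic x)
      (fun _ => measurableSet_Iic.nullMeasurableSet)
      (fun a b hab => Iic_subset_Iic.2 hab) ⟨0, measure_ne_top _ _⟩
    exact this
  have hempty : (⋂ x : ℝ, Set.Iic x) = (∅ : Set ℝ) := by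
    ext y
    simp only [mem_iInter, mem_Iic, mem_empty_iff_false, iff_false, not_forall, not_le]
    exact ⟨y - 1, by linarith⟩
  rw [hempty, measure_empty] at h
  have h2 : Tendsto (fun x => (κ u (Set.Iic x)).toReal) atBot (𝓝 (0 : ℝ)) := by
    have := (ENNReal.tendsto_toReal (by norm_num : (0:ℝ≥0∞) ≠ ⊤)).comp h
    simpa [Function.comp_def] using this
  obtain ⟨x₀, hx₀⟩ := eventually_atBot.1 (h2.eventually (eventually_lt_nhds hτ))
  refine ⟨x₀, fun x hx => ?_⟩
  by_contra hlt
  push_neg at hlt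
  exact absurd hx (not_le.2 (hx₀ x hlt.le))

lemma condQuantile_le_of_right_null {u y₀ τ : ℝ} (hτ0 : 0 < τ) (hτ1 : τ ≤ 1)
    (h : κ u (Set.Ioi y₀) = 0) : condQuantile κ τ u ≤ y₀ := by
  refine csInf_le (quantSet_bddBelow κ u hτ0) ?_
  have h1 : κ u (Set.Iic y₀) = 1 := by
    have := measure_add_measure_compl (μ := κ u) (measurableSet_Iic (a := y₀))
    rw [compl_Iic, h, add_zero] at this
    rw [this, measure_univ]
  simp only [mem_setOf_eq, h1, ENNReal.toReal_one]
  exact hτ1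

lemma le_condQuantile_of_left_null {u y₀ τ : ℝ} (hτ0 : 0 < τ) (hτ1 : τ < 1)
    (h : κ u (Set.Iio y₀) = 0) : y₀ ≤ condQuantile κ τ u := by
  refine le_csInf (quantSet_nonempty κ u hτ1) ?_
  intro x hx
  by_contra hlt
  push_neg at hlt
  have : κ u (Set.Iic x) = 0 :=
    measure_mono_null (Iic_subset_Iio.2 hlt) h
  rw [mem_setOf_eq, this] at hx
  simp only [ENNReal.toReal_zero] at hx
  exact absurd hx (not_le.2 hτ0)

end QuantAux

lemma lint_layercake {Ω : Type*} [MeasurableSpace Ω] (P : Measure Ω) [IsProbabilityMeasure P]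
    {X : Ω → ℝ} (hXm : Measurable X) (y₀ : ℝ) :
    ∫⁻ ω, ENNReal.ofReal (y₀ - X ω) ∂P = ∫⁻ t in Set.Iic y₀, P.map X (Set.Iic t) := by
  have key : ∀ ω, ENNReal.ofReal (y₀ - X ω)
      = ∫⁻ t in Set.Iic y₀, (Set.Ici (X ω)).indicator (fun _ => (1:ℝ≥0∞)) t := by
    intro ω
    rw [lintegral_indicator_const measurableSet_Ici, one_mul,
      Measure.restrict_apply measurableSet_Ici, Ici_inter_Iic, Real.volume_Icc]
  simp_rw [key]
  rw [lintegral_lintegral_swap]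
  · refine setLIntegral_congr_fun measurableSet_Iic (fun t _ => ?_)
    have hfun : (fun ω => (Set.Ici (X ω)).indicator (fun _ => (1:ℝ≥0∞)) t)
        = (X ⁻¹' (Set.Iic t)).indicator (fun _ => (1:ℝ≥0∞)) := by
      funext ω
      by_cases h : X ω ≤ t <;> simp [Set.indicator_apply, h]
    rw [hfun, lintegral_indicator_const (hXm measurableSet_Iic), one_mul,
      Measure.map_apply hXm measurableSet_Iic]
  · have hfun : (Function.uncurry fun (ω : Ω) (t : ℝ) =>
        (Set.Ici (X ω)).indicator (fun _ => (1:ℝ≥0∞)) t)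
        = {p : Ω × ℝ | X p.1 ≤ p.2}.indicator (fun _ => (1:ℝ≥0∞)) := by
      funext p
      by_cases h : X p.1 ≤ p.2 <;>
        simp [Function.uncurry, Set.indicator_apply, h, Set.mem_Ici]
    rw [hfun]
    exact (measurable_const.indicator
      (measurableSet_le (hXm.comp measurable_fst) measurable_snd)).aemeasurable

lemma layercake_real {Ω : Type*} [MeasurableSpace Ω] (P : Measure Ω) [IsProbabilityMeasure P]
    {X : Ω → ℝ} (hXm : Measurable X) (hXi : Integrable X P) (y₀ : ℝ) :
    IntegrableOn (fun t => cdf (P.map X) t) (Set.Iic y₀) volume ∧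
    ∫ ω, max (y₀ - X ω) 0 ∂P = ∫ t in Set.Iic y₀, cdf (P.map X) t := by
  haveI : IsProbabilityMeasure (P.map X) := Measure.isProbabilityMeasure_map hXm.aemeasurable
  have hfin : ∫⁻ ω, ENNReal.ofReal (y₀ - X ω) ∂P < ⊤ := by
    have hi : Integrable (fun ω => y₀ - X ω) P := (integrable_const y₀).sub hXi
    calc ∫⁻ ω, ENNReal.ofReal (y₀ - X ω) ∂P
        ≤ ∫⁻ ω, (‖y₀ - X ω‖₊ : ℝ≥0∞) ∂P := by
          refine lintegral_mono fun ω => ?_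
          rw [← enorm_eq_nnnorm, ← ofReal_norm, Real.norm_eq_abs]
          exact ENNReal.ofReal_le_ofReal (le_abs_self _)
      _ < ⊤ := hi.2
  have hlc := lint_layercake P hXm y₀
  have hcdfeq : ∀ t, cdf (P.map X) t = (P.map X (Set.Iic t)).toReal :=
    fun t => cdf_eq_real _ t
  have hW : ∫ ω, max (y₀ - X ω) 0 ∂P = (∫⁻ ω, ENNReal.ofReal (y₀ - X ω) ∂P).toReal := by
    have hm1 : AEStronglyMeasurable (fun ω => max (y₀ - X ω) 0) P :=
      ((measurable_const.sub hXm).max measurable_const).aestronglyMeasurable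
    have heq := integral_eq_lintegral_of_nonneg_ae (μ := P) (f := fun ω => max (y₀ - X ω) 0)
      (ae_of_all _ fun ω => le_max_right _ _) hm1
    rw [heq]
    congr 1
    refine lintegral_congr fun ω => ?_
    show ENNReal.ofReal (max (y₀ - X ω) 0) = ENNReal.ofReal (y₀ - X ω)
    rcases le_total (y₀ - X ω) 0 with h | h
    · rw [max_eq_right h, ENNReal.ofReal_of_nonpos h, ENNReal.ofReal_zero]
    · rw [max_eq_left h]
  have hR : ∫ t in Set.Iic y₀, cdf (P.map X) t
      = (∫⁻ t in Set.Iic y₀, P.map X (Set.Iic t)).toReal := by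
    have heq := integral_eq_lintegral_of_nonneg_ae (μ := volume.restrict (Set.Iic y₀))
      (f := fun t => cdf (P.map X) t) (ae_of_all _ fun t => cdf_nonneg _ _)
      (cdf (P.map X)).mono.measurable.aestronglyMeasurable
    rw [heq]
    congr 1
    refine lintegral_congr fun t => ?_
    show ENNReal.ofReal (cdf (P.map X) t) = (P.map X) (Set.Iic t)
    rw [hcdfeq t, ENNReal.ofReal_toReal (measure_ne_top _ _)]
  refine ⟨⟨(cdf (P.map X)).mono.measurable.aestronglyMeasurable, ?_⟩, ?_⟩
  · rw [hasFiniteIntegral_iff_ofReal (ae_of_all _ fun t => cdf_nonneg _ _)]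
    have : ∫⁻ t in Set.Iic y₀, ENNReal.ofReal (cdf (P.map X) t)
        = ∫⁻ t in Set.Iic y₀, P.map X (Set.Iic t) := by
      refine lintegral_congr fun t => ?_
      rw [hcdfeq t, ENNReal.ofReal_toReal (measure_ne_top _ _)]
    rw [this, ← hlc]
    exact hfin
  · rw [hW, hR, hlc]


/-- Proposition 1 of the paper: under rational expectations (`E[Y | σ(ψ)] = ψ` a.s.),
if the conditional quantile functions are continuous in the conditioning value and
`Δ(y₀) = 0` at a point `y₀` interior to the support of the distribution of `ψ`, then the
conditional distribution of `Y` given `ψ = y₀` is degenerate at `y₀`. -/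
theorem degenerate_at_boundary
    {Ω : Type*} [MeasurableSpace Ω] (P : Measure Ω) [IsProbabilityMeasure P]
    {Y ψ : Ω → ℝ} (hYm : Measurable Y) (hψm : Measurable ψ)
    (hYi : Integrable Y P) (hψi : Integrable ψ P)
    (hRE : P[Y | MeasurableSpace.comap ψ Real.measurableSpace] =ᵐ[P] ψ)
    (κ : Kernel ℝ ℝ) [IsMarkovKernel κ]
    (hκ : ∀ B : Set ℝ, MeasurableSet B →
      P[fun ω => Set.indicator (Y ⁻¹' B) (fun _ => (1 : ℝ)) ω |
          MeasurableSpace.comap ψ Real.measurableSpace]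
        =ᵐ[P] fun ω => ((κ (ψ ω)) B).toReal)
    (hcont : ∀ τ ∈ Set.Ioo (0 : ℝ) 1, Continuous fun u : ℝ => condQuantile κ τ u)
    {y₀ : ℝ} (hy₀ : y₀ ∈ interior (measSupport (P.map ψ)))
    (hΔ : ∫ t in Set.Iic y₀, (cdf (P.map Y) t - cdf (P.map ψ) t) = 0) :
    κ y₀ {y₀} = 1 := by
  classical
  have hm : MeasurableSpace.comap ψ Real.measurableSpace ≤ ‹MeasurableSpace Ω› :=
    measurable_iff_comap_le.mp hψm
  set s : Set Ω := ψ ⁻¹' (Set.Iic y₀) with hs_def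
  have hsm : MeasurableSet s := hψm measurableSet_Iic
  have hs_m : MeasurableSet[MeasurableSpace.comap ψ Real.measurableSpace] s := ⟨Set.Iic y₀, measurableSet_Iic, rfl⟩
  set W : Ω → ℝ := fun ω => max (y₀ - Y ω) 0 with hW_def
  set V : Ω → ℝ := fun ω => max (y₀ - ψ ω) 0 with hV_def
  have hyY : Integrable (fun ω => y₀ - Y ω) P := (integrable_const y₀).sub hYi
  have hyψ : Integrable (fun ω => y₀ - ψ ω) P := (integrable_const y₀).sub hψi
  have hWi : Integrable W P := hyY.pos_part
  have hVi : Integrable V P := hyψ.pos_part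
  obtain ⟨hYcdf, hYlc⟩ := layercake_real P hYm hYi y₀
  obtain ⟨hψcdf, hψlc⟩ := layercake_real P hψm hψi y₀
  have hWV : ∫ ω, W ω ∂P = ∫ ω, V ω ∂P := by
    rw [hW_def, hV_def]
    rw [hYlc, hψlc]
    have h0 := integral_sub hYcdf hψcdf
    rw [h0] at hΔ
    linarith
  have hSI : ∀ (u : Set Ω), MeasurableSet[MeasurableSpace.comap ψ Real.measurableSpace] u → ∫ ω in u, Y ω ∂P = ∫ ω in u, ψ ω ∂P := by
    intro u hu
    have hum : MeasurableSet u := hm u hu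
    calc ∫ ω in u, Y ω ∂P = ∫ ω in u, (P[Y|MeasurableSpace.comap ψ Real.measurableSpace]) ω ∂P := (setIntegral_condExp hm hYi hu).symm
      _ = ∫ ω in u, ψ ω ∂P := setIntegral_congr_ae hum (hRE.mono fun ω h _ => h)
  have hA1 : ∫ ω in s, Y ω ∂P = ∫ ω in s, ψ ω ∂P := hSI s hs_m
  have hA2 : ∫ ω in s, V ω ∂P = ∫ ω, V ω ∂P := by
    have hVind : V = s.indicator V := by
      funext ω
      by_cases h : ω ∈ s
      · rw [Set.indicator_of_mem h]
      · rw [Set.indicator_of_notMem h]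
        have hψω : y₀ < ψ ω := not_le.1 fun hc => h hc
        exact max_eq_right (by linarith)
    conv_rhs => rw [hVind]
    rw [integral_indicator hsm]
  have hA3 : ∫ ω in s, V ω ∂P = ∫ ω in s, (y₀ - ψ ω) ∂P := by
    refine setIntegral_congr_fun hsm fun ω hω => ?_
    have : ψ ω ≤ y₀ := hω
    exact max_eq_left (by linarith)
  have hA4 : ∫ ω in s, (y₀ - Y ω) ∂P = ∫ ω in s, (y₀ - ψ ω) ∂P := by
    have hc1 : Integrable (fun _ : Ω => y₀) (P.restrict s) := (integrable_const y₀).integrableOn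
    rw [integral_sub hc1 hYi.integrableOn, integral_sub hc1 hψi.integrableOn, hA1]
  have hsYW : ∫ ω in s, (y₀ - Y ω) ∂P = ∫ ω, W ω ∂P := by
    rw [hA4, ← hA3, hA2, ← hWV]
  have hle1 : ∫ ω in s, (y₀ - Y ω) ∂P ≤ ∫ ω in s, W ω ∂P :=
    setIntegral_mono_on hyY.integrableOn hWi.integrableOn hsm
      (fun ω _ => le_max_left _ _)
  have hle2 : ∫ ω in s, W ω ∂P ≤ ∫ ω, W ω ∂P :=
    setIntegral_le_integral hWi (ae_of_all _ fun ω => le_max_right _ _)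
  have hsW : ∫ ω in s, W ω ∂P = ∫ ω, W ω ∂P := le_antisymm hle2 (hsYW ▸ hle1)
  have hsWY : ∫ ω in s, W ω ∂P = ∫ ω in s, (y₀ - Y ω) ∂P := by rw [hsW, ← hsYW]
  have hE1 : ∀ᵐ ω ∂(P.restrict s), Y ω ≤ y₀ := by
    have hzero : ∫ ω in s, (W ω - (y₀ - Y ω)) ∂P = 0 := by
      rw [integral_sub hWi.integrableOn hyY.integrableOn, hsWY]
      ring
    have hnn : 0 ≤ fun ω => W ω - (y₀ - Y ω) := fun ω => sub_nonneg.2 (le_max_left _ _)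
    have hint : Integrable (fun ω => W ω - (y₀ - Y ω)) (P.restrict s) :=
      hWi.integrableOn.sub hyY.integrableOn
    have hae0 := (integral_eq_zero_iff_of_nonneg hnn hint).1 hzero
    filter_upwards [hae0] with ω hω
    have h1 : W ω - (y₀ - Y ω) = 0 := hω
    have h2 : (0:ℝ) ≤ W ω := le_max_right _ _
    linarith
  have hE2 : ∀ᵐ ω ∂(P.restrict sᶜ), y₀ ≤ Y ω := by
    have hcompl : ∫ ω in sᶜ, W ω ∂P = 0 := by
      have hadd := integral_add_compl hsm hWi
      linarith [hsW, hadd]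
    have hnn' : 0 ≤ W := fun ω => le_max_right _ _
    have hae0 := (integral_eq_zero_iff_of_nonneg hnn' hWi.integrableOn).1 hcompl
    filter_upwards [hae0] with ω hω
    have h1 : W ω = 0 := hω
    have h2 : y₀ - Y ω ≤ W ω := le_max_left _ _
    linarith
  have hker : ∀ (B : Set ℝ), MeasurableSet B → ∀ (u : Set Ω), MeasurableSet u →
      MeasurableSet[MeasurableSpace.comap ψ Real.measurableSpace] u → (∀ᵐ ω ∂(P.restrict u), Y ω ∉ B) →
      ∀ᵐ ω ∂(P.restrict u), κ (ψ ω) B = 0 := by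
    intro B hB u hum hu hae
    have hfm : Measurable fun ω => (κ (ψ ω) B).toReal :=
      ((Kernel.measurable_coe κ hB).comp hψm).ennreal_toReal
    have hfi : Integrable (fun ω => (κ (ψ ω) B).toReal) P := by
      refine ⟨hfm.aestronglyMeasurable,
        HasFiniteIntegral.of_bounded (C := 1) (ae_of_all _ fun ω => ?_)⟩
      rw [Real.norm_eq_abs, abs_of_nonneg ENNReal.toReal_nonneg]
      refine ENNReal.toReal_le_of_le_ofReal zero_le_one ?_
      rw [ENNReal.ofReal_one]
      exact prob_le_one
    have hgi : Integrable ((Y ⁻¹' B).indicator fun _ => (1:ℝ)) P :=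
      (integrable_const 1).indicator (hYm hB)
    have hint0 : ∫ ω in u, (κ (ψ ω) B).toReal ∂P = 0 := by
      have h1 : ∫ ω in u, (κ (ψ ω) B).toReal ∂P
          = ∫ ω in u, (P[fun ω => Set.indicator (Y ⁻¹' B) (fun _ => (1:ℝ)) ω | MeasurableSpace.comap ψ Real.measurableSpace]) ω ∂P :=
        setIntegral_congr_ae hum ((hκ B hB).mono fun ω h _ => h.symm)
      rw [h1, setIntegral_condExp hm hgi hu]
      refine integral_eq_zero_of_ae ?_
      filter_upwards [hae] with ω hω
      simp [Set.indicator_apply, hω]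
    have hnnf : 0 ≤ fun ω => (κ (ψ ω) B).toReal := fun ω => ENNReal.toReal_nonneg
    have hae0 := (integral_eq_zero_iff_of_nonneg hnnf hfi.integrableOn).1 hint0
    filter_upwards [hae0] with ω hω
    have h1 : (κ (ψ ω) B).toReal = 0 := hω
    rcases (ENNReal.toReal_eq_zero_iff _).1 h1 with h | h
    · exact h
    · exact absurd h (measure_ne_top _ _)
  have hK1 : ∀ᵐ ω ∂(P.restrict s), κ (ψ ω) (Set.Ioi y₀) = 0 := by
    refine hker (Set.Ioi y₀) measurableSet_Ioi s hsm hs_m ?_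
    filter_upwards [hE1] with ω hω
    simpa using not_lt.2 hω
  have hK2 : ∀ᵐ ω ∂(P.restrict sᶜ), κ (ψ ω) (Set.Iio y₀) = 0 := by
    refine hker (Set.Iio y₀) measurableSet_Iio sᶜ hsm.compl hs_m.compl ?_
    filter_upwards [hE2] with ω hω
    simpa using not_lt.2 hω
  set μ : Measure ℝ := P.map ψ with hμ_def
  set T : Set ℝ := {v | (v ≤ y₀ → κ v (Set.Ioi y₀) = 0) ∧ (y₀ < v → κ v (Set.Iio y₀) = 0)}
    with hT_def
  have hTm : MeasurableSet T := by
    have e1 : {v : ℝ | v ≤ y₀ → κ v (Set.Ioi y₀) = 0}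
        = (Set.Iic y₀)ᶜ ∪ {v | κ v (Set.Ioi y₀) = 0} := by
      ext v; simp [imp_iff_not_or]
    have e2 : {v : ℝ | y₀ < v → κ v (Set.Iio y₀) = 0}
        = (Set.Ioi y₀)ᶜ ∪ {v | κ v (Set.Iio y₀) = 0} := by
      ext v; simp [imp_iff_not_or]
    have hT : T = {v : ℝ | v ≤ y₀ → κ v (Set.Ioi y₀) = 0}
        ∩ {v : ℝ | y₀ < v → κ v (Set.Iio y₀) = 0} := by
      ext v; simp [hT_def, Set.mem_setOf_eq, Set.mem_inter_iff]
    rw [hT, e1, e2]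
    exact (measurableSet_Iic.compl.union
        ((Kernel.measurable_coe κ measurableSet_Ioi) (measurableSet_singleton 0))).inter
      (measurableSet_Ioi.compl.union
        ((Kernel.measurable_coe κ measurableSet_Iio) (measurableSet_singleton 0)))
  have haeT : ∀ᵐ ω ∂P, ψ ω ∈ T := by
    filter_upwards [ae_imp_of_ae_restrict hK1, ae_imp_of_ae_restrict hK2] with ω h1 h2
    refine ⟨fun hle => h1 hle, fun hlt => h2 ?_⟩
    simp only [hs_def, Set.mem_compl_iff, Set.mem_preimage, Set.mem_Iic]
    exact not_le.2 hlt
  have hμT : ∀ᵐ v ∂μ, v ∈ T := (ae_map_iff hψm.aemeasurable hTm).2 haeT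
  have hTc : μ Tᶜ = 0 := by
    have := ae_iff.1 hμT
    simpa [Set.compl_def] using this
  have hposT : ∀ I : Set ℝ, 0 < μ I → ∃ v, v ∈ T ∧ v ∈ I := by
    intro I hI
    have hne : μ (I ∩ T) ≠ 0 := by
      intro h0
      have h1 : μ I ≤ μ (I ∩ T) + μ (I \ T) := measure_le_inter_add_diff μ I T
      have h2 : μ (I \ T) = 0 := measure_mono_null (Set.diff_subset_iff.2 (by simp)) hTc
      rw [h0, h2, add_zero] at h1
      exact absurd h1 (not_le.2 hI)
    obtain ⟨v, hv⟩ := nonempty_of_measure_ne_zero hne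
    exact ⟨v, hv.2, hv.1⟩
  have hQ : ∀ τ ∈ Set.Ioo (0:ℝ) 1, condQuantile κ τ y₀ = y₀ := by
    intro τ hτ
    obtain ⟨hτ0, hτ1⟩ := hτ
    have hq := hcont τ ⟨hτ0, hτ1⟩
    obtain ⟨ε, hε, hball⟩ := Metric.isOpen_iff.1 isOpen_interior y₀ hy₀
    have hsupp : Metric.ball y₀ ε ⊆ measSupport μ := fun x hx => interior_subset (hball hx)
    refine le_antisymm ?_ ?_
    · by_contra hgt
      push_neg at hgt
      have hUopen : IsOpen {v : ℝ | y₀ < condQuantile κ τ v} := isOpen_lt continuous_const hq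
      obtain ⟨δ, hδ, hballU⟩ := Metric.isOpen_iff.1 hUopen y₀ hgt
      set r := min ε δ with hr
      have hr0 : 0 < r := lt_min hε hδ
      have hc : y₀ - r / 2 ∈ measSupport μ := by
        refine hsupp ?_
        rw [Metric.mem_ball, Real.dist_eq, abs_of_nonpos (by linarith)]
        have : r ≤ ε := min_le_left _ _
        linarith
      have hI : 0 < μ (Set.Ioo (y₀ - r) y₀) :=
        hc _ (Ioo_mem_nhds (by linarith) (by linarith))
      obtain ⟨v, hvT, hvI⟩ := hposT _ hI
      have h1 : condQuantile κ τ v ≤ y₀ :=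
        condQuantile_le_of_right_null κ hτ0 hτ1.le (hvT.1 hvI.2.le)
      have h2 : y₀ < condQuantile κ τ v := by
        refine hballU ?_
        rw [Metric.mem_ball, Real.dist_eq]
        have hv1 := hvI.1
        have hv2 := hvI.2
        have : r ≤ δ := min_le_right _ _
        rw [abs_of_nonpos (by linarith)]
        linarith
      linarith
    · by_contra hlt
      push_neg at hlt
      have hUopen : IsOpen {v : ℝ | condQuantile κ τ v < y₀} := isOpen_lt hq continuous_const
      obtain ⟨δ, hδ, hballU⟩ := Metric.isOpen_iff.1 hUopen y₀ hlt
      set r := min ε δ with hr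
      have hr0 : 0 < r := lt_min hε hδ
      have hc : y₀ + r / 2 ∈ measSupport μ := by
        refine hsupp ?_
        rw [Metric.mem_ball, Real.dist_eq, abs_of_nonneg (by linarith)]
        have : r ≤ ε := min_le_left _ _
        linarith
      have hI : 0 < μ (Set.Ioo y₀ (y₀ + r)) :=
        hc _ (Ioo_mem_nhds (by linarith) (by linarith))
      obtain ⟨v, hvT, hvI⟩ := hposT _ hI
      have h1 : y₀ ≤ condQuantile κ τ v :=
        le_condQuantile_of_left_null κ hτ0 hτ1 (hvT.2 hvI.1)
      have h2 : condQuantile κ τ v < y₀ := by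
        refine hballU ?_
        rw [Metric.mem_ball, Real.dist_eq]
        have hv1 := hvI.1
        have hv2 := hvI.2
        have : r ≤ δ := min_le_right _ _
        rw [abs_of_nonneg (by linarith)]
        linarith
      linarith
  have hC1 : κ y₀ (Set.Iio y₀) = 0 := by
    have hx : ∀ x < y₀, κ y₀ (Set.Iic x) = 0 := by
      intro x hxy
      by_contra h0
      have hF : 0 < (κ y₀ (Set.Iic x)).toReal := ENNReal.toReal_pos h0 (measure_ne_top _ _)
      set τ := min ((κ y₀ (Set.Iic x)).toReal) (1/2) with hτdef
      have hτ0 : 0 < τ := lt_min hF (by norm_num)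
      have hτ1 : τ < 1 := lt_of_le_of_lt (min_le_right _ _) (by norm_num)
      have hmem : x ∈ {x' : ℝ | τ ≤ (κ y₀ (Set.Iic x')).toReal} := by
        show τ ≤ (κ y₀ (Set.Iic x)).toReal
        exact min_le_left _ _
      have hle := csInf_le (quantSet_bddBelow κ y₀ hτ0) hmem
      have heq : condQuantile κ τ y₀ = y₀ := hQ τ ⟨hτ0, hτ1⟩
      rw [condQuantile] at heq
      linarith [heq ▸ hle]
    have hsub : Set.Iio y₀ ⊆ ⋃ n : ℕ, Set.Iic (y₀ - 1/(n+1)) := by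
      intro y hy
      obtain ⟨n, hn⟩ := exists_nat_one_div_lt (K := ℝ) (sub_pos.2 hy)
      refine Set.mem_iUnion.2 ⟨n, ?_⟩
      simp only [Set.mem_Iic]
      linarith
    refine measure_mono_null hsub (measure_iUnion_null fun n => hx _ ?_)
    have : (0:ℝ) < 1/(n+1) := by positivity
    linarith
  have hC2 : κ y₀ (Set.Iic y₀) = 1 := by
    refine le_antisymm prob_le_one ?_
    by_contra hlt
    push_neg at hlt
    set a := (κ y₀ (Set.Iic y₀)).toReal with ha
    have halt : a < 1 := by
      have := (ENNReal.toReal_lt_toReal (measure_ne_top _ _) (by norm_num : (1:ℝ≥0∞) ≠ ⊤)).2 hlt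
      simpa using this
    set τ := (max a (1/2) + 1)/2 with hτdef
    have hmax1 : max a (1/2) < 1 := max_lt halt (by norm_num)
    have hτa : a < τ := by
      have : a ≤ max a (1/2) := le_max_left _ _
      rw [hτdef]; linarith
    have hτ0 : 0 < τ := by
      have : (1/2:ℝ) ≤ max a (1/2) := le_max_right _ _
      rw [hτdef]; linarith
    have hτ1 : τ < 1 := by rw [hτdef]; linarith
    have hne : {x : ℝ | τ ≤ (κ y₀ (Set.Iic x)).toReal}.Nonempty := quantSet_nonempty κ y₀ hτ1
    have hr : ∀ r ∈ Set.Ioi y₀, ENNReal.ofReal τ ≤ κ y₀ (Set.Iic r) := by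
      intro r hrr
      have hrr' : y₀ < r := hrr
      have hsinf : sInf {x : ℝ | τ ≤ (κ y₀ (Set.Iic x)).toReal} < r := by
        have heq : condQuantile κ τ y₀ = y₀ := hQ τ ⟨hτ0, hτ1⟩
        rw [condQuantile] at heq
        rw [heq]; exact hrr'
      obtain ⟨x, hxmem, hxlt⟩ := exists_lt_of_csInf_lt hne hsinf
      have hxr : τ ≤ (κ y₀ (Set.Iic r)).toReal :=
        le_trans hxmem (ENNReal.toReal_mono (measure_ne_top _ _)
          (measure_mono (Set.Iic_subset_Iic.2 hxlt.le)))
      exact (ENNReal.ofReal_le_iff_le_toReal (measure_ne_top _ _)).2 hxr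
    have htend := tendsto_measure_biInter_gt (μ := κ y₀) (s := fun r : ℝ => Set.Iic r) (a := y₀)
      (fun r _ => measurableSet_Iic.nullMeasurableSet) (fun i j _ hij => Set.Iic_subset_Iic.2 hij)
      ⟨y₀ + 1, by linarith, measure_ne_top _ _⟩
    have hInter : (⋂ r, ⋂ (_ : r > y₀), Set.Iic r) = Set.Iic y₀ := by
      ext y
      simp only [Set.mem_iInter, Set.mem_Iic]
      constructor
      · intro h
        by_contra hy
        push_neg at hy
        have := h ((y₀ + y)/2) (by linarith)
        linarith
      · intro h r hrr
        linarith
    rw [hInter] at htend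
    have hge : ENNReal.ofReal τ ≤ κ y₀ (Set.Iic y₀) :=
      ge_of_tendsto htend (eventually_nhdsWithin_of_forall hr)
    have : τ ≤ a := (ENNReal.ofReal_le_iff_le_toReal (measure_ne_top _ _)).1 hge
    linarith
  have hsingle : κ y₀ {y₀} = κ y₀ (Set.Iic y₀) - κ y₀ (Set.Iio y₀) := by
    have hset : ({y₀} : Set ℝ) = Set.Iic y₀ \ Set.Iio y₀ := by
      rw [Set.Iic_sdiff_Iio_same]
    rw [hset]
    exact measure_diff Set.Iio_subset_Iic_self measurableSet_Iio.nullMeasurableSet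
      (measure_ne_top _ _)
  rw [hsingle, hC1, hC2, tsub_zero]
end

section
/- Let Y and ψ be integrable real random variables on a common probability space satisfying H₀, so that in particular E[Y] = E[ψ] and E[(y − Y)⁺] ≥ E[(y − ψ)⁺] for all y ∈ ℝ. Let ε = Y − ψ, and let ξ_ψ and ξ_Y be integrable random variables with ξ_ψ independent of ψ, E[ξ_ψ] = 0, ξ_Y independent of Y, E[ξ_Y] = 0. Define Ŷ = Y + ξ_Y and ψ̂ = ψ + ξ_ψ. Suppose in addition that ε + ξ_Y is independent of ψ and that F_{ξ_ψ} dominates F_{ξ_Y + ε} at the second order. Then Ŷ and ψ̂ satisfy H₀: E[Ŷ] = E[ψ̂] and E[(y − Ŷ)⁺] ≥ E[(y − ψ̂)⁺] for all y ∈ ℝ. -/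
open MeasureTheory ProbabilityTheory
open scoped ENNReal

/-- A cdf `F` dominates a cdf `G` at the second order if
`∫_{-∞}^t F(s) ds ≤ ∫_{-∞}^t G(s) ds` for all `t`. Here stated for the laws `μ` and `ν`. -/
def SecondOrderDom (μ ν : Measure ℝ) : Prop :=
  ∀ t : ℝ, ∫ s in Set.Iic t, cdf μ s ≤ ∫ s in Set.Iic t, cdf ν s

lemma ofReal_max_zero' (x : ℝ) : ENNReal.ofReal (max x 0) = ENNReal.ofReal x := by
  rcases le_total x 0 with h | h
  · simp [max_eq_right h, ENNReal.ofReal_of_nonpos h]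
  · simp [max_eq_left h]

/-- `E_ρ[(a - u)⁺] = ∫_{-∞}^a F_ρ(s) ds`, in `ℝ≥0∞` form. -/
lemma lintegral_max_eq_lintegral_cdf (ρ : Measure ℝ) [IsProbabilityMeasure ρ] (a : ℝ) :
    ∫⁻ u, ENNReal.ofReal (max (a - u) 0) ∂ρ
      = ∫⁻ s in Set.Iic a, ENNReal.ofReal (cdf ρ s) := by
  have hmeas : Measurable (fun p : ℝ × ℝ =>
      ({q : ℝ × ℝ | q.1 ≤ q.2}.indicator (fun _ => (1 : ℝ≥0∞)) p)) :=
    measurable_one.indicator (measurableSet_le measurable_fst measurable_snd)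
  have h1 : ∀ u : ℝ, ENNReal.ofReal (max (a - u) 0)
      = ∫⁻ s in Set.Iic a, {q : ℝ × ℝ | q.1 ≤ q.2}.indicator (fun _ => (1 : ℝ≥0∞)) (u, s) := by
    intro u
    have h2 : ∀ s : ℝ, {q : ℝ × ℝ | q.1 ≤ q.2}.indicator (fun _ => (1 : ℝ≥0∞)) (u, s)
        = (Set.Ici u).indicator (fun _ => (1 : ℝ≥0∞)) s := by
      intro s
      by_cases h : u ≤ s
      · rw [Set.indicator_of_mem (by exact h), Set.indicator_of_mem (by exact h)]
      · rw [Set.indicator_of_notMem (by exact h), Set.indicator_of_notMem (by exact h)]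
    rw [ofReal_max_zero']
    simp_rw [h2]
    rw [lintegral_indicator measurableSet_Ici,
      Measure.restrict_restrict measurableSet_Ici, Set.Ici_inter_Iic, setLIntegral_one,
      Real.volume_Icc]
  calc ∫⁻ u, ENNReal.ofReal (max (a - u) 0) ∂ρ
      = ∫⁻ u, (∫⁻ s in Set.Iic a,
          {q : ℝ × ℝ | q.1 ≤ q.2}.indicator (fun _ => (1 : ℝ≥0∞)) (u, s)) ∂ρ :=
        lintegral_congr fun u => h1 u
    _ = ∫⁻ s in Set.Iic a, (∫⁻ u,
          {q : ℝ × ℝ | q.1 ≤ q.2}.indicator (fun _ => (1 : ℝ≥0∞)) (u, s) ∂ρ) :=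
        lintegral_lintegral_swap (μ := ρ) (ν := volume.restrict (Set.Iic a))
          (f := fun u s => {q : ℝ × ℝ | q.1 ≤ q.2}.indicator (fun _ => (1 : ℝ≥0∞)) (u, s))
          hmeas.aemeasurable
    _ = ∫⁻ s in Set.Iic a, ENNReal.ofReal (cdf ρ s) := by
        refine lintegral_congr fun s => ?_
        have h3 : ∀ u : ℝ, {q : ℝ × ℝ | q.1 ≤ q.2}.indicator (fun _ => (1 : ℝ≥0∞)) (u, s)
            = (Set.Iic s).indicator (fun _ => (1 : ℝ≥0∞)) u := by
          intro u
          by_cases h : u ≤ s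
          · rw [Set.indicator_of_mem (by exact h), Set.indicator_of_mem (by exact h)]
          · rw [Set.indicator_of_notMem (by exact h),
              Set.indicator_of_notMem (by exact h)]
        simp_rw [h3]
        rw [lintegral_indicator measurableSet_Iic, setLIntegral_one, ofReal_cdf]

lemma lintegral_max_ne_top (ρ : Measure ℝ) [IsProbabilityMeasure ρ]
    (hi : Integrable id ρ) (a : ℝ) :
    ∫⁻ u, ENNReal.ofReal (max (a - u) 0) ∂ρ ≠ ∞ := by
  have h : Integrable (fun u => max (a - u) 0) ρ := ((integrable_const a).sub hi).pos_part
  exact ((hasFiniteIntegral_iff_ofReal (ae_of_all _ fun u => le_max_right _ _)).1 h.2).ne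

/-- If `η ⫫ ψ`, then `E[(y - (ψ + η))⁺] = ∫ ∫_{-∞}^{y-s} F_η dP_ψ(s)` in `ℝ≥0∞` form. -/
lemma key_indep {Ω : Type*} [MeasurableSpace Ω] (P : Measure Ω) [IsProbabilityMeasure P]
    {ψ η : Ω → ℝ} (hψm : Measurable ψ) (hηm : Measurable η)
    (hindep : IndepFun η ψ P) (y : ℝ) :
    ∫⁻ ω, ENNReal.ofReal (max (y - (ψ ω + η ω)) 0) ∂P
      = ∫⁻ s, (∫⁻ t in Set.Iic (y - s), ENNReal.ofReal (cdf (P.map η) t)) ∂(P.map ψ) := by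
  have _i : IsProbabilityMeasure (P.map η) := Measure.isProbabilityMeasure_map hηm.aemeasurable
  have _j : IsProbabilityMeasure (P.map ψ) := Measure.isProbabilityMeasure_map hψm.aemeasurable
  have hmap : P.map (fun ω => (ψ ω, η ω)) = (P.map ψ).prod (P.map η) :=
    (indepFun_iff_map_prod_eq_prod_map_map hψm.aemeasurable hηm.aemeasurable).1 hindep.symm
  have hg : Measurable (fun p : ℝ × ℝ => ENNReal.ofReal (max (y - (p.1 + p.2)) 0)) := by
    measurability
  calc ∫⁻ ω, ENNReal.ofReal (max (y - (ψ ω + η ω)) 0) ∂P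
      = ∫⁻ p, ENNReal.ofReal (max (y - (p.1 + p.2)) 0) ∂(P.map (fun ω => (ψ ω, η ω))) := by
        rw [lintegral_map hg (hψm.prodMk hηm)]
    _ = ∫⁻ s, ∫⁻ u, ENNReal.ofReal (max ((y - s) - u) 0) ∂(P.map η) ∂(P.map ψ) := by
        rw [hmap, lintegral_prod _ hg.aemeasurable]
        simp_rw [sub_add_eq_sub_sub]
    _ = ∫⁻ s, (∫⁻ t in Set.Iic (y - s), ENNReal.ofReal (cdf (P.map η) t)) ∂(P.map ψ) :=
        lintegral_congr fun s => lintegral_max_eq_lintegral_cdf (P.map η) (y - s)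

/-- Proposition 4 of the paper (robustness to measurement errors): if `(Y, ψ)` satisfy H₀
(i.e. `E[Y] = E[ψ]` and `E[(y-Y)⁺] ≥ E[(y-ψ)⁺]` for all `y`), the measurement errors are
classical, `ε + ξ_Y` is independent of `ψ` and `F_{ξ_ψ}` dominates `F_{ξ_Y + ε}` at the
second order, then `Ŷ = Y + ξ_Y` and `ψ̂ = ψ + ξ_ψ` also satisfy H₀. -/
theorem measurement_error_robustness
    {Ω : Type*} [MeasurableSpace Ω] (P : Measure Ω) [IsProbabilityMeasure P]
    {Y ψ ξψ ξY : Ω → ℝ}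
    (hYm : Measurable Y) (hψm : Measurable ψ) (hξψm : Measurable ξψ) (hξYm : Measurable ξY)
    (hYi : Integrable Y P) (hψi : Integrable ψ P)
    (hξψi : Integrable ξψ P) (hξYi : Integrable ξY P)
    -- `(Y, ψ)` satisfy H₀:
    (hmean : ∫ ω, Y ω ∂P = ∫ ω, ψ ω ∂P)
    (hineq : ∀ y : ℝ, ∫ ω, max (y - ψ ω) 0 ∂P ≤ ∫ ω, max (y - Y ω) 0 ∂P)
    -- classical measurement errors:
    (hξψindep : IndepFun ξψ ψ P) (hξψ0 : ∫ ω, ξψ ω ∂P = 0)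
    (hξYindep : IndepFun ξY Y P) (hξY0 : ∫ ω, ξY ω ∂P = 0)
    -- `ε + ξ_Y ⫫ ψ` where `ε = Y - ψ`:
    (hindep : IndepFun (fun ω => (Y ω - ψ ω) + ξY ω) ψ P)
    -- `F_{ξ_ψ}` dominates `F_{ξ_Y + ε}` at the second order:
    (hdom : SecondOrderDom (P.map ξψ) (P.map (fun ω => ξY ω + (Y ω - ψ ω)))) :
    (∫ ω, (Y ω + ξY ω) ∂P = ∫ ω, (ψ ω + ξψ ω) ∂P) ∧
      ∀ y : ℝ, ∫ ω, max (y - (ψ ω + ξψ ω)) 0 ∂P ≤ ∫ ω, max (y - (Y ω + ξY ω)) 0 ∂P := by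
  have hfun : (fun ω => ξY ω + (Y ω - ψ ω)) = (fun ω => (Y ω - ψ ω) + ξY ω) := by
    funext ω; ring
  rw [hfun] at hdom
  set η : Ω → ℝ := fun ω => (Y ω - ψ ω) + ξY ω with hη
  have hηm : Measurable η := (hYm.sub hψm).add hξYm
  have hηi : Integrable η P := (hYi.sub hψi).add hξYi
  set μ : Measure ℝ := P.map ξψ with hμdef
  set ν : Measure ℝ := P.map η with hνdef
  have _iμ : IsProbabilityMeasure μ := Measure.isProbabilityMeasure_map hξψm.aemeasurable
  have _iν : IsProbabilityMeasure ν := Measure.isProbabilityMeasure_map hηm.aemeasurable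
  have hμid : Integrable id μ := by
    rw [hμdef, integrable_map_measure aestronglyMeasurable_id hξψm.aemeasurable]
    exact hξψi
  have hνid : Integrable id ν := by
    rw [hνdef, integrable_map_measure aestronglyMeasurable_id hηm.aemeasurable]
    exact hηi
  constructor
  · rw [integral_add hYi hξYi, integral_add hψi hξψi, hmean, hξY0, hξψ0]
  intro y
  -- the pointwise (in `s`) comparison, from second-order dominance
  have hstep : ∀ a : ℝ, ∫⁻ t in Set.Iic a, ENNReal.ofReal (cdf μ t)
      ≤ ∫⁻ t in Set.Iic a, ENNReal.ofReal (cdf ν t) := by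
    intro a
    have hμfin : ∫⁻ t in Set.Iic a, ENNReal.ofReal (cdf μ t) ≠ ∞ := by
      rw [← lintegral_max_eq_lintegral_cdf μ a]; exact lintegral_max_ne_top μ hμid a
    have hνfin : ∫⁻ t in Set.Iic a, ENNReal.ofReal (cdf ν t) ≠ ∞ := by
      rw [← lintegral_max_eq_lintegral_cdf ν a]; exact lintegral_max_ne_top ν hνid a
    have hμeq : ∫⁻ t in Set.Iic a, ENNReal.ofReal (cdf μ t)
        = ENNReal.ofReal (∫ t in Set.Iic a, cdf μ t) := by
      rw [integral_eq_lintegral_of_nonneg_ae (ae_of_all _ fun t => cdf_nonneg μ t)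
        (monotone_cdf μ).measurable.aestronglyMeasurable, ENNReal.ofReal_toReal hμfin]
    have hνeq : ∫⁻ t in Set.Iic a, ENNReal.ofReal (cdf ν t)
        = ENNReal.ofReal (∫ t in Set.Iic a, cdf ν t) := by
      rw [integral_eq_lintegral_of_nonneg_ae (ae_of_all _ fun t => cdf_nonneg ν t)
        (monotone_cdf ν).measurable.aestronglyMeasurable, ENNReal.ofReal_toReal hνfin]
    rw [hμeq, hνeq]
    exact ENNReal.ofReal_le_ofReal (hdom a)
  -- comparison of the lintegrals
  have hL : ∫⁻ ω, ENNReal.ofReal (max (y - (ψ ω + ξψ ω)) 0) ∂P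
      ≤ ∫⁻ ω, ENNReal.ofReal (max (y - (Y ω + ξY ω)) 0) ∂P := by
    have hsum : ∀ ω, ψ ω + η ω = Y ω + ξY ω := fun ω => by rw [hη]; ring
    have h2 := key_indep P hψm hηm hindep y
    simp_rw [hsum] at h2
    rw [key_indep P hψm hξψm hξψindep y, h2]
    exact lintegral_mono fun s => hstep (y - s)
  -- conclude in real form
  have hsm1 : Measurable (fun ω => max (y - (ψ ω + ξψ ω)) 0) :=
    (measurable_const.sub (hψm.add hξψm)).max measurable_const
  have hsm2 : Measurable (fun ω => max (y - (Y ω + ξY ω)) 0) :=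
    (measurable_const.sub (hYm.add hξYm)).max measurable_const
  have hi2 : Integrable (fun ω => max (y - (Y ω + ξY ω)) 0) P :=
    ((integrable_const y).sub (hYi.add hξYi)).pos_part
  have hfin2 : ∫⁻ ω, ENNReal.ofReal (max (y - (Y ω + ξY ω)) 0) ∂P ≠ ∞ :=
    ((hasFiniteIntegral_iff_ofReal (ae_of_all _ fun ω => le_max_right _ _)).1 hi2.2).ne
  have e1 : ∫ ω, max (y - (ψ ω + ξψ ω)) 0 ∂P
      = (∫⁻ ω, ENNReal.ofReal (max (y - (ψ ω + ξψ ω)) 0) ∂P).toReal :=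
    integral_eq_lintegral_of_nonneg_ae (ae_of_all _ fun ω => le_max_right _ _)
      hsm1.aestronglyMeasurable
  have e2 : ∫ ω, max (y - (Y ω + ξY ω)) 0 ∂P
      = (∫⁻ ω, ENNReal.ofReal (max (y - (Y ω + ξY ω)) 0) ∂P).toReal :=
    integral_eq_lintegral_of_nonneg_ae (ae_of_all _ fun ω => le_max_right _ _)
      hsm2.aestronglyMeasurable
  rw [e1, e2]
  exact ENNReal.toReal_mono hfin2 hL
end

section
/- Let ψ, ε, ξ_Y, ξ_ψ be square-integrable real random variables on a common probability space with Cov(ε + ξ_Y, ψ) = 0, Cov(ξ_ψ, ψ) = 0, Cov(ξ_ψ, ε + ξ_Y) ≥ 0, and Var(ψ) ≥ λ̲ · Var(ξ_ψ) for some λ̲ ≥ 0. Define Ŷ = ψ + ε + ξ_Y and ψ̂ = ψ + ξ_ψ, and assume Var(ψ̂) > 0. Then the slope of the theoretical linear regression of Ŷ on ψ̂, namely β = Cov(Ŷ, ψ̂)/Var(ψ̂), satisfies β ≥ 1 − 1/(1 + λ̲). -/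
open MeasureTheory ProbabilityTheory

/-- The covariance of two real random variables under a probability measure `P`. -/
noncomputable def cov {Ω : Type*} [MeasurableSpace Ω] (P : Measure Ω) (f g : Ω → ℝ) : ℝ :=
  ∫ ω, f ω * g ω ∂P - (∫ ω, f ω ∂P) * (∫ ω, g ω ∂P)

section Aux

variable {Ω : Type*} [MeasurableSpace Ω] (P : Measure Ω) [IsProbabilityMeasure P]

lemma myIntegrableMul {f g : Ω → ℝ} (hf : MemLp f 2 P) (hg : MemLp g 2 P) :
    Integrable (fun ω => f ω * g ω) P := by
  have h : Integrable (fun ω => (f ω + g ω) ^ 2 - f ω ^ 2 - g ω ^ 2) P := by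
    have h1 := (hf.add hg).integrable_sq
    simp only [Pi.add_apply] at h1
    exact (h1.sub hf.integrable_sq).sub hg.integrable_sq
  have heq : (fun ω => f ω * g ω)
      = fun ω => (2:ℝ)⁻¹ * ((f ω + g ω) ^ 2 - f ω ^ 2 - g ω ^ 2) := by
    funext ω; ring
  rw [heq]
  exact h.const_mul _

omit [IsProbabilityMeasure P] in
lemma cov_comm (f g : Ω → ℝ) : cov P f g = cov P g f := by
  simp only [cov, mul_comm]

lemma cov_add_left {f g h : Ω → ℝ} (hf : MemLp f 2 P) (hg : MemLp g 2 P)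
    (hh : MemLp h 2 P) :
    cov P (fun ω => f ω + g ω) h = cov P f h + cov P g h := by
  simp only [cov]
  rw [show (fun ω => (f ω + g ω) * h ω) = (fun ω => f ω * h ω + g ω * h ω) by
        funext ω; ring]
  rw [integral_add (myIntegrableMul P hf hh) (myIntegrableMul P hg hh),
      integral_add (hf.integrable one_le_two) (hg.integrable one_le_two)]
  ring

lemma cov_add_right {f g h : Ω → ℝ} (hf : MemLp f 2 P) (hg : MemLp g 2 P)
    (hh : MemLp h 2 P) :
    cov P f (fun ω => g ω + h ω) = cov P f g + cov P f h := by
  rw [cov_comm, cov_add_left P hg hh hf, cov_comm P g f, cov_comm P h f]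

lemma variance_eq_cov {f : Ω → ℝ} (hf : MemLp f 2 P) : variance f P = cov P f f := by
  rw [variance_eq_sub hf, cov]
  have h : P[f ^ 2] = ∫ ω, f ω * f ω ∂P :=
    integral_congr_ae (by filter_upwards with ω; simp [sq])
  rw [h, sq]

end Aux

/-- Proposition 7.2 of the paper: if `Cov(ε + ξ_Y, ψ) = 0`, `Cov(ξ_ψ, ψ) = 0`,
`Cov(ξ_ψ, ε + ξ_Y) ≥ 0` and `Var(ψ) ≥ λ̲ Var(ξ_ψ)` with `λ̲ ≥ 0`, then the slope
`β = Cov(Ŷ, ψ̂)/Var(ψ̂)` of the theoretical linear regression of `Ŷ = ψ + ε + ξ_Y` on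
`ψ̂ = ψ + ξ_ψ` satisfies `β ≥ 1 - 1/(1 + λ̲)`. -/
theorem regression_slope_lower_bound
    {Ω : Type*} [MeasurableSpace Ω] (P : Measure Ω) [IsProbabilityMeasure P]
    {ψ ε ξY ξψ : Ω → ℝ}
    (hψ : MemLp ψ 2 P) (hε : MemLp ε 2 P) (hξY : MemLp ξY 2 P) (hξψ : MemLp ξψ 2 P)
    (lam : ℝ) (hlam : 0 ≤ lam)
    (hcov1 : cov P (fun ω => ε ω + ξY ω) ψ = 0)
    (hcov2 : cov P ξψ ψ = 0)
    (hcov3 : 0 ≤ cov P ξψ (fun ω => ε ω + ξY ω))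
    (hvar : lam * variance ξψ P ≤ variance ψ P)
    (hpos : 0 < variance (fun ω => ψ ω + ξψ ω) P) :
    1 - 1 / (1 + lam) ≤
      cov P (fun ω => ψ ω + ε ω + ξY ω) (fun ω => ψ ω + ξψ ω) /
        variance (fun ω => ψ ω + ξψ ω) P := by
  have hE : MemLp (fun ω => ε ω + ξY ω) 2 P := hε.add hξY
  have hψξ : MemLp (fun ω => ψ ω + ξψ ω) 2 P := hψ.add hξψ
  -- decompose the numerator
  have hnum : cov P (fun ω => ψ ω + ε ω + ξY ω) (fun ω => ψ ω + ξψ ω)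
      = variance ψ P + cov P ξψ (fun ω => ε ω + ξY ω) := by
    have h1 : cov P (fun ω => ψ ω + ε ω + ξY ω) (fun ω => ψ ω + ξψ ω)
        = cov P (fun ω => ψ ω + (ε ω + ξY ω)) (fun ω => ψ ω + ξψ ω) := by
      congr 1; funext ω; ring
    rw [h1, cov_add_left P hψ hE hψξ, cov_add_right P hψ hψ hξψ,
        cov_add_right P hE hψ hξψ, cov_comm P ψ ξψ, hcov2,
        hcov1,
        cov_comm P (fun ω => ε ω + ξY ω) ξψ, ← variance_eq_cov P hψ]
    ring
  -- decompose the denominator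
  have hden : variance (fun ω => ψ ω + ξψ ω) P = variance ψ P + variance ξψ P := by
    rw [variance_eq_cov P hψξ, cov_add_left P hψ hξψ hψξ, cov_add_right P hψ hψ hξψ,
        cov_add_right P hξψ hψ hξψ, cov_comm P ψ ξψ, hcov2,
        ← variance_eq_cov P hψ, ← variance_eq_cov P hξψ]
    ring
  set C := cov P ξψ (fun ω => ε ω + ξY ω) with hC
  set Vψ := variance ψ P
  set Vξ := variance ξψ P
  have hVξ : 0 ≤ Vξ := variance_nonneg _ _
  have hD : 0 < Vψ + Vξ := hden ▸ hpos
  have h1 : (0:ℝ) < 1 + lam := by linarith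
  rw [hnum, hden, show (1:ℝ) - 1 / (1 + lam) = lam / (1 + lam) by field_simp; ring,
      div_le_div_iff₀ h1 hD]
  nlinarith [hvar, hcov3, hVξ]
end

section
/- Let ψ_L ≤ ψ_U be integrable real random variables on a common probability space and Y an integrable real random variable. For b ∈ ℝ define ψ^b = ψ_U·1{ψ_U < b} + max(b, ψ_L)·1{ψ_U ≥ b}, with ψ^{−∞} = ψ_L and ψ^{∞} = ψ_U, and let F^b denote the cdf of ψ^b and 𝓕_B = {F^b : b ∈ ℝ ∪ {−∞, +∞}}. If E[ψ_L] ≤ E[Y] ≤ E[ψ_U], then there exists a unique F* ∈ 𝓕_B such that ∫ u dF*(u) = E[Y]. -/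
open MeasureTheory ProbabilityTheory Filter

/-- `ψ^b = ψ_U·1{ψ_U < b} + max(b, ψ_L)·1{ψ_U ≥ b}`. -/
noncomputable def psiB {Ω : Type*} (ψL ψU : Ω → ℝ) (b : ℝ) (ω : Ω) : ℝ :=
  if ψU ω < b then ψU ω else max b (ψL ω)

/-- The family `𝓕_B` of candidate belief distributions: the laws of `ψ^b` for `b ∈ ℝ`,
together with the laws of `ψ^{-∞} = ψ_L` and `ψ^{∞} = ψ_U`. -/
def FB {Ω : Type*} [MeasurableSpace Ω] (P : Measure Ω) (ψL ψU : Ω → ℝ) :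
    Set (Measure ℝ) :=
  {μ | (∃ b : ℝ, μ = P.map (psiB ψL ψU b)) ∨ μ = P.map ψL ∨ μ = P.map ψU}

section Aux
set_option linter.unusedSectionVars false
variable {Ω : Type*} [MeasurableSpace Ω] {P : Measure Ω} [IsProbabilityMeasure P]
variable {ψL ψU f g : Ω → ℝ}

lemma psiB_eq (hle : ∀ ω, ψL ω ≤ ψU ω) (b : ℝ) (ω : Ω) :
    psiB ψL ψU b ω = min (ψU ω) (max b (ψL ω)) := by
  unfold psiB
  split_ifs with h
  · exact (min_eq_left (le_max_of_le_left h.le)).symm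
  · exact (min_eq_right (max_le (le_of_not_gt h) (hle ω))).symm

lemma psiB_le (hle : ∀ ω, ψL ω ≤ ψU ω) (b : ℝ) (ω : Ω) : psiB ψL ψU b ω ≤ ψU ω := by
  rw [psiB_eq hle]; exact min_le_left _ _

lemma le_psiB (hle : ∀ ω, ψL ω ≤ ψU ω) (b : ℝ) (ω : Ω) : ψL ω ≤ psiB ψL ψU b ω := by
  rw [psiB_eq hle]; exact le_min (hle ω) (le_max_right _ _)

lemma psiB_mono (hle : ∀ ω, ψL ω ≤ ψU ω) {b b' : ℝ} (h : b ≤ b') (ω : Ω) :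
    psiB ψL ψU b ω ≤ psiB ψL ψU b' ω := by
  rw [psiB_eq hle, psiB_eq hle]
  exact min_le_min le_rfl (max_le_max h le_rfl)

lemma psiB_meas (hψLm : Measurable ψL) (hψUm : Measurable ψU)
    (hle : ∀ ω, ψL ω ≤ ψU ω) (b : ℝ) : Measurable (psiB ψL ψU b) := by
  have : psiB ψL ψU b = fun ω => min (ψU ω) (max b (ψL ω)) := funext (psiB_eq hle b)
  rw [this]
  exact hψUm.min (measurable_const.max hψLm)

lemma psiB_int (hψLm : Measurable ψL) (hψUm : Measurable ψU)
    (hψLi : Integrable ψL P) (hψUi : Integrable ψU P)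
    (hle : ∀ ω, ψL ω ≤ ψU ω) (b : ℝ) : Integrable (psiB ψL ψU b) P := by
  refine Integrable.mono' (hψLi.abs.add hψUi.abs)
    (psiB_meas hψLm hψUm hle b).aestronglyMeasurable (ae_of_all _ fun ω => ?_)
  have h1 := le_psiB hle b ω
  have h2 := psiB_le hle b ω
  simp only [Pi.add_apply]
  rw [Real.norm_eq_abs, abs_le]
  constructor
  · have := neg_abs_le (ψL ω); have := abs_nonneg (ψU ω); linarith
  · have := le_abs_self (ψU ω); have := abs_nonneg (ψL ω); linarith

lemma psiB_lip (hle : ∀ ω, ψL ω ≤ ψU ω) (b b' : ℝ) (ω : Ω) :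
    |psiB ψL ψU b ω - psiB ψL ψU b' ω| ≤ |b - b'| := by
  rw [psiB_eq hle, psiB_eq hle]
  calc |min (ψU ω) (max b (ψL ω)) - min (ψU ω) (max b' (ψL ω))|
      ≤ max |ψU ω - ψU ω| |max b (ψL ω) - max b' (ψL ω)| := abs_min_sub_min_le_max _ _ _ _
    _ ≤ max |ψU ω - ψU ω| (max |b - b'| |ψL ω - ψL ω|) :=
        max_le_max le_rfl (abs_max_sub_max_le_max _ _ _ _)
    _ ≤ |b - b'| := by simp [abs_nonneg]

lemma abs_integral_sub_le (hfi : Integrable f P) (hgi : Integrable g P) (c : ℝ)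
    (h : ∀ ω, |f ω - g ω| ≤ c) : |∫ ω, f ω ∂P - ∫ ω, g ω ∂P| ≤ c := by
  rw [← integral_sub hfi hgi]
  calc |∫ ω, (f ω - g ω) ∂P| ≤ ∫ ω, |f ω - g ω| ∂P := by
        simpa [Real.norm_eq_abs] using
          norm_integral_le_integral_norm (μ := P) fun ω => f ω - g ω
    _ ≤ ∫ _ω, c ∂P := integral_mono (hfi.sub hgi).abs (integrable_const c) h
    _ = c := by simp

lemma map_eq_of_le_integral_eq (hfi : Integrable f P) (hgi : Integrable g P)
    (hle : ∀ ω, f ω ≤ g ω) (h : ∫ ω, f ω ∂P = ∫ ω, g ω ∂P) :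
    P.map f = P.map g := by
  have h0 : ∫ ω, (g ω - f ω) ∂P = 0 := by rw [integral_sub hgi hfi]; linarith
  have hz : (fun ω => g ω - f ω) =ᵐ[P] 0 :=
    (integral_eq_zero_iff_of_nonneg (fun ω => sub_nonneg.2 (hle ω)) (hgi.sub hfi)).1 h0
  have hae : f =ᵐ[P] g := hz.mono fun ω hω => by
    have : g ω - f ω = 0 := hω
    linarith
  exact Measure.map_congr hae

lemma mean_map (hfm : Measurable f) :
    ∫ x : ℝ, x ∂(P.map f) = ∫ ω, f ω ∂P :=
  integral_map hfm.aemeasurable aestronglyMeasurable_id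

end Aux

/-- First part of Proposition 8 of the paper: if `E[ψ_L] ≤ E[Y] ≤ E[ψ_U]`, there exists a
unique `F* ∈ 𝓕_B` whose mean equals `E[Y]`. -/
theorem exists_unique_Fstar
    {Ω Ω' : Type*} [MeasurableSpace Ω] [MeasurableSpace Ω']
    (P : Measure Ω) (P' : Measure Ω')
    [IsProbabilityMeasure P] [IsProbabilityMeasure P']
    {ψL ψU : Ω → ℝ} {Y : Ω' → ℝ}
    (hψLm : Measurable ψL) (hψUm : Measurable ψU)
    (hψLi : Integrable ψL P) (hψUi : Integrable ψU P)
    (hle : ∀ ω, ψL ω ≤ ψU ω)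
    (hYm : Measurable Y) (hYi : Integrable Y P')
    (hlow : ∫ ω, ψL ω ∂P ≤ ∫ ω, Y ω ∂P')
    (hup : ∫ ω, Y ω ∂P' ≤ ∫ ω, ψU ω ∂P) :
    ∃! μ : Measure ℝ, μ ∈ FB P ψL ψU ∧ ∫ x : ℝ, x ∂μ = ∫ ω, Y ω ∂P' := by
  set t : ℝ := ∫ ω, Y ω ∂P' with ht
  -- the "family" of functions whose laws make up FB
  set Fam : (Ω → ℝ) → Prop := fun f =>
    f = ψL ∨ f = ψU ∨ ∃ b : ℝ, f = psiB ψL ψU b with hFam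
  have famL : Fam ψL := Or.inl rfl
  have famU : Fam ψU := Or.inr (Or.inl rfl)
  have famB : ∀ b, Fam (psiB ψL ψU b) := fun b => Or.inr (Or.inr ⟨b, rfl⟩)
  have fam_meas : ∀ f, Fam f → Measurable f := by
    rintro f (rfl | rfl | ⟨b, rfl⟩)
    exacts [hψLm, hψUm, psiB_meas hψLm hψUm hle b]
  have fam_int : ∀ f, Fam f → Integrable f P := by
    rintro f (rfl | rfl | ⟨b, rfl⟩)
    exacts [hψLi, hψUi, psiB_int hψLm hψUm hψLi hψUi hle b]
  have fam_cmp : ∀ f g, Fam f → Fam g → (∀ ω, f ω ≤ g ω) ∨ (∀ ω, g ω ≤ f ω) := by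
    rintro f g (rfl | rfl | ⟨b, rfl⟩) (rfl | rfl | ⟨b', rfl⟩)
    · exact Or.inl fun ω => le_rfl
    · exact Or.inl hle
    · exact Or.inl (le_psiB hle b')
    · exact Or.inr hle
    · exact Or.inl fun ω => le_rfl
    · exact Or.inr (psiB_le hle b')
    · exact Or.inr (le_psiB hle b)
    · exact Or.inl (psiB_le hle b)
    · rcases le_total b b' with h | h
      · exact Or.inl (psiB_mono hle h)
      · exact Or.inr (psiB_mono hle h)
  have mem_iff : ∀ μ, μ ∈ FB P ψL ψU ↔ ∃ f, Fam f ∧ μ = P.map f := by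
    intro μ
    constructor
    · rintro (⟨b, rfl⟩ | rfl | rfl)
      exacts [⟨_, famB b, rfl⟩, ⟨_, famL, rfl⟩, ⟨_, famU, rfl⟩]
    · rintro ⟨f, (rfl | rfl | ⟨b, rfl⟩), rfl⟩
      exacts [Or.inr (Or.inl rfl), Or.inr (Or.inr rfl), Or.inl ⟨b, rfl⟩]
  -- uniqueness, given existence of one witness
  have uniq : ∀ f g, Fam f → Fam g → (∫ ω, f ω ∂P = t) → (∫ ω, g ω ∂P = t) →
      P.map f = P.map g := by
    intro f g hf hg hif hig
    rcases fam_cmp f g hf hg with h | h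
    · exact map_eq_of_le_integral_eq (fam_int f hf) (fam_int g hg) h (by rw [hif, hig])
    · exact (map_eq_of_le_integral_eq (fam_int g hg) (fam_int f hf) h (by rw [hif, hig])).symm
  -- existence: find f in the family with ∫ f = t
  have exf : ∃ f, Fam f ∧ ∫ ω, f ω ∂P = t := by
    rcases eq_or_lt_of_le hlow with h | h
    · exact ⟨ψL, famL, h⟩
    rcases eq_or_lt_of_le hup with h' | h'
    · exact ⟨ψU, famU, h'.symm⟩
    -- strict case: intermediate value
    set g : ℝ → ℝ := fun b => ∫ ω, psiB ψL ψU b ω ∂P with hg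
    have hgc : Continuous g := by
      have : LipschitzWith 1 g := by
        refine LipschitzWith.of_dist_le_mul fun b b' => ?_
        rw [Real.dist_eq, Real.dist_eq, NNReal.coe_one, one_mul]
        exact abs_integral_sub_le (psiB_int hψLm hψUm hψLi hψUi hle b)
          (psiB_int hψLm hψUm hψLi hψUi hle b') _ (fun ω => psiB_lip hle b b' ω)
      exact this.continuous
    have htop : Tendsto g atTop (nhds (∫ ω, ψU ω ∂P)) := by
      refine tendsto_integral_filter_of_dominated_convergence
        (fun ω => |ψL ω| + |ψU ω|) ?_ ?_ (hψLi.abs.add hψUi.abs) ?_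
      · exact Eventually.of_forall fun b =>
          (psiB_meas hψLm hψUm hle b).aestronglyMeasurable
      · refine Eventually.of_forall fun b => ae_of_all _ fun ω => ?_
        have h1 := le_psiB hle b ω
        have h2 := psiB_le hle b ω
        show ‖psiB ψL ψU b ω‖ ≤ |ψL ω| + |ψU ω|
        rw [Real.norm_eq_abs, abs_le]
        constructor
        · have := neg_abs_le (ψL ω); have := abs_nonneg (ψU ω); linarith
        · have := le_abs_self (ψU ω); have := abs_nonneg (ψL ω); linarith
      · refine ae_of_all _ fun ω => ?_
        refine Tendsto.congr' ?_ (tendsto_const_nhds (x := ψU ω))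
        filter_upwards [eventually_ge_atTop (ψU ω)] with b hb
        rw [psiB_eq hle]
        exact (min_eq_left (le_max_of_le_left hb)).symm
    have hbot : Tendsto g atBot (nhds (∫ ω, ψL ω ∂P)) := by
      refine tendsto_integral_filter_of_dominated_convergence
        (fun ω => |ψL ω| + |ψU ω|) ?_ ?_ (hψLi.abs.add hψUi.abs) ?_
      · exact Eventually.of_forall fun b =>
          (psiB_meas hψLm hψUm hle b).aestronglyMeasurable
      · refine Eventually.of_forall fun b => ae_of_all _ fun ω => ?_
        have h1 := le_psiB hle b ω
        have h2 := psiB_le hle b ω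
        show ‖psiB ψL ψU b ω‖ ≤ |ψL ω| + |ψU ω|
        rw [Real.norm_eq_abs, abs_le]
        constructor
        · have := neg_abs_le (ψL ω); have := abs_nonneg (ψU ω); linarith
        · have := le_abs_self (ψU ω); have := abs_nonneg (ψL ω); linarith
      · refine ae_of_all _ fun ω => ?_
        refine Tendsto.congr' ?_ (tendsto_const_nhds (x := ψL ω))
        filter_upwards [eventually_le_atBot (ψL ω)] with b hb
        rw [psiB_eq hle]
        rw [max_eq_right hb]
        exact (min_eq_right (hle ω)).symm
    obtain ⟨b1, hb1⟩ : ∃ b1, g b1 < t := (hbot.eventually_lt_const h).exists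
    obtain ⟨b2, hb2⟩ : ∃ b2, t < g b2 := (htop.eventually_const_lt h').exists
    have hb12 : b1 ≤ b2 := by
      by_contra hc
      push_neg at hc
      have : g b2 ≤ g b1 := integral_mono (psiB_int hψLm hψUm hψLi hψUi hle b2)
        (psiB_int hψLm hψUm hψLi hψUi hle b1) (psiB_mono hle hc.le)
      linarith
    have : t ∈ Set.Icc (g b1) (g b2) := ⟨hb1.le, hb2.le⟩
    obtain ⟨b, _, hbt⟩ := intermediate_value_Icc hb12 hgc.continuousOn this
    exact ⟨psiB ψL ψU b, famB b, hbt⟩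
  obtain ⟨f, hfFam, hft⟩ := exf
  refine ⟨P.map f, ⟨(mem_iff _).2 ⟨f, hfFam, rfl⟩, by rw [mean_map (fam_meas f hfFam), hft]⟩, ?_⟩
  rintro μ ⟨hμmem, hμt⟩
  obtain ⟨g', hg'Fam, rfl⟩ := (mem_iff μ).1 hμmem
  rw [mean_map (fam_meas g' hg'Fam)] at hμt
  exact uniq g' f hg'Fam hfFam hμt hft
end

section
/- Let l ≤ u be real numbers and for b ∈ ℝ define φ^b(l, u) = u·1{u < b} + max(b, l)·1{u ≥ b}. Then: (a) for all b, b' ∈ ℝ, |φ^b(l, u) − φ^{b'}(l, u)| ≤ |b − b'|; (b) consequently, for integrable real random variables ψ_L ≤ ψ_U on a common probability space, the map b ↦ E[ψ^b], where ψ^b = φ^b(ψ_L, ψ_U), is 1-Lipschitz (hence continuous) and nondecreasing on ℝ, with lim_{b → −∞} E[ψ^b] = E[ψ_L] and lim_{b → +∞} E[ψ^b] = E[ψ_U]. -/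
open MeasureTheory ProbabilityTheory Filter

/-- `φ^b(l, u) = u·1{u < b} + max(b, l)·1{u ≥ b}`. -/
noncomputable def phiB (b l u : ℝ) : ℝ := if u < b then u else max b l

lemma phiB_eq_min_max {b l u : ℝ} (h : l ≤ u) : phiB b l u = min u (max b l) := by
  unfold phiB
  rcases lt_or_ge u b with hb | hb
  · simp [hb, max_eq_left (h.trans hb.le), min_eq_left hb.le]
  · rw [if_neg (not_lt.mpr hb), min_eq_right (max_le hb h)]

lemma phiB_abs_le {b l u : ℝ} (h : l ≤ u) (b' : ℝ) :
    |phiB b l u - phiB b' l u| ≤ |b - b'| := by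
  rw [phiB_eq_min_max h, phiB_eq_min_max h]
  simp only [min_def, max_def]
  split_ifs <;> rw [abs_le] <;>
    rcases abs_cases (b - b') with ⟨h1, h2⟩ | ⟨h1, h2⟩ <;> constructor <;> linarith

lemma phiB_mono {l u : ℝ} (h : l ≤ u) : Monotone fun b => phiB b l u := by
  intro a b hab
  show phiB a l u ≤ phiB b l u
  rw [phiB_eq_min_max h, phiB_eq_min_max h]
  exact min_le_min le_rfl (max_le_max hab le_rfl)

lemma phiB_mem {b l u : ℝ} (h : l ≤ u) : l ≤ phiB b l u ∧ phiB b l u ≤ u := by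
  rw [phiB_eq_min_max h]
  exact ⟨le_min h (le_max_right _ _), min_le_left _ _⟩

/-- (a) For `l ≤ u`, `b ↦ φ^b(l, u)` is 1-Lipschitz; (b) consequently, for integrable
`ψ_L ≤ ψ_U`, the map `b ↦ E[ψ^b]` is 1-Lipschitz (hence continuous) and nondecreasing, with
limits `E[ψ_L]` at `-∞` and `E[ψ_U]` at `+∞`. -/
theorem psiB_mean_lipschitz_monotone_limits
    {Ω : Type*} [MeasurableSpace Ω] (P : Measure Ω) [IsProbabilityMeasure P]
    {ψL ψU : Ω → ℝ}
    (hψLm : Measurable ψL) (hψUm : Measurable ψU)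
    (hψLi : Integrable ψL P) (hψUi : Integrable ψU P)
    (hle : ∀ ω, ψL ω ≤ ψU ω) :
    (∀ l u b b' : ℝ, l ≤ u → |phiB b l u - phiB b' l u| ≤ |b - b'|) ∧
    LipschitzWith 1 (fun b : ℝ => ∫ ω, phiB b (ψL ω) (ψU ω) ∂P) ∧
    Continuous (fun b : ℝ => ∫ ω, phiB b (ψL ω) (ψU ω) ∂P) ∧
    Monotone (fun b : ℝ => ∫ ω, phiB b (ψL ω) (ψU ω) ∂P) ∧
    Tendsto (fun b : ℝ => ∫ ω, phiB b (ψL ω) (ψU ω) ∂P) atBot (nhds (∫ ω, ψL ω ∂P)) ∧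
    Tendsto (fun b : ℝ => ∫ ω, phiB b (ψL ω) (ψU ω) ∂P) atTop (nhds (∫ ω, ψU ω ∂P)) := by
  have hmeas : ∀ b : ℝ, Measurable (fun ω => phiB b (ψL ω) (ψU ω)) := by
    intro b
    unfold phiB
    exact Measurable.ite (measurableSet_lt hψUm measurable_const) hψUm
      (measurable_const.max hψLm)
  have hbound : ∀ b : ℝ, ∀ ω, |phiB b (ψL ω) (ψU ω)| ≤ |ψL ω| + |ψU ω| := by
    intro b ω
    obtain ⟨h1, h2⟩ := phiB_mem (b := b) (hle ω)
    rw [abs_le]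
    constructor
    · have := neg_abs_le (ψL ω); have := abs_nonneg (ψU ω); linarith
    · have := le_abs_self (ψU ω); have := abs_nonneg (ψL ω); linarith
  have hint : ∀ b : ℝ, Integrable (fun ω => phiB b (ψL ω) (ψU ω)) P := by
    intro b
    refine (hψLi.abs.add hψUi.abs).mono ((hmeas b).aestronglyMeasurable) ?_
    filter_upwards with ω
    simp only [Pi.add_apply, Real.norm_eq_abs]
    rw [abs_of_nonneg (show (0:ℝ) ≤ |ψL ω| + |ψU ω| by positivity)]
    exact hbound b ω
  have hlip : LipschitzWith 1 (fun b : ℝ => ∫ ω, phiB b (ψL ω) (ψU ω) ∂P) := by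
    rw [lipschitzWith_iff_dist_le_mul]
    intro b b'
    simp only [Real.dist_eq, NNReal.coe_one, one_mul]
    rw [← integral_sub (hint b) (hint b')]
    calc |∫ ω, (phiB b (ψL ω) (ψU ω) - phiB b' (ψL ω) (ψU ω)) ∂P|
        ≤ ∫ ω, |phiB b (ψL ω) (ψU ω) - phiB b' (ψL ω) (ψU ω)| ∂P :=
          by simpa [Real.norm_eq_abs] using
            norm_integral_le_integral_norm (μ := P)
              (fun ω => phiB b (ψL ω) (ψU ω) - phiB b' (ψL ω) (ψU ω))
      _ ≤ ∫ ω, |b - b'| ∂P := by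
          refine integral_mono ((hint b).sub (hint b')).abs (integrable_const _) ?_
          intro ω; exact phiB_abs_le (hle ω) b'
      _ = |b - b'| := by simp
  have hmono : Monotone (fun b : ℝ => ∫ ω, phiB b (ψL ω) (ψU ω) ∂P) := by
    intro a b hab
    exact integral_mono (hint a) (hint b) fun ω => phiB_mono (hle ω) hab
  have hdom : Integrable (fun ω => |ψL ω| + |ψU ω|) P := hψLi.abs.add hψUi.abs
  have hbot : Tendsto (fun b : ℝ => ∫ ω, phiB b (ψL ω) (ψU ω) ∂P) atBot
      (nhds (∫ ω, ψL ω ∂P)) := by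
    refine tendsto_integral_filter_of_dominated_convergence _ ?_ ?_ hdom ?_
    · filter_upwards with b using (hmeas b).aestronglyMeasurable
    · filter_upwards with b
      filter_upwards with ω
      simpa [Real.norm_eq_abs] using hbound b ω
    · filter_upwards with ω
      have : ∀ᶠ b in atBot, phiB b (ψL ω) (ψU ω) = ψL ω := by
        filter_upwards [eventually_le_atBot (ψL ω)] with b hb
        rw [phiB_eq_min_max (hle ω), max_eq_right hb, min_eq_right (hle ω)]
      exact Tendsto.congr' (this.mono fun b hb => hb.symm) tendsto_const_nhds
  have htop : Tendsto (fun b : ℝ => ∫ ω, phiB b (ψL ω) (ψU ω) ∂P) atTop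
      (nhds (∫ ω, ψU ω ∂P)) := by
    refine tendsto_integral_filter_of_dominated_convergence _ ?_ ?_ hdom ?_
    · filter_upwards with b using (hmeas b).aestronglyMeasurable
    · filter_upwards with b
      filter_upwards with ω
      simpa [Real.norm_eq_abs] using hbound b ω
    · filter_upwards with ω
      have : ∀ᶠ b in atTop, phiB b (ψL ω) (ψU ω) = ψU ω := by
        filter_upwards [eventually_ge_atTop (ψU ω)] with b hb
        rw [phiB_eq_min_max (hle ω), min_eq_left]
        exact le_max_of_le_left hb
      exact Tendsto.congr' (this.mono fun b hb => hb.symm) tendsto_const_nhds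
  exact ⟨fun l u b b' h => phiB_abs_le h b', hlip, hlip.continuous, hmono, hbot, htop⟩
end

section
/- Let ψ_L ≤ ψ_U be integrable real random variables, Y an integrable real random variable with E[ψ_L] ≤ E[Y] ≤ E[ψ_U], and let F* be the unique element of 𝓕_B with ∫ u dF*(u) = E[Y]. Then for every cumulative distribution function F of an integrable distribution satisfying F_{ψ_U} ≤ F ≤ F_{ψ_L} pointwise and ∫ u dF(u) = E[Y], one has ∫_{−∞}^t F*(y) dy ≤ ∫_{−∞}^t F(y) dy for all t ∈ ℝ; that is, F* dominates at the second order every such F. -/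
open MeasureTheory ProbabilityTheory

open MeasureTheory ProbabilityTheory Set
open scoped ENNReal

section Aux

lemma aux_swap_Iic (μ : Measure ℝ) [IsFiniteMeasure μ] (t : ℝ) :
    ∫⁻ s in Set.Iic t, μ (Set.Iic s) = ∫⁻ x, ENNReal.ofReal (t - x) ∂μ := by
  have hg : Measurable (Function.uncurry fun (s x : ℝ) => if x ≤ s then (1 : ℝ≥0∞) else 0) := by
    have : (Function.uncurry fun (s x : ℝ) => if x ≤ s then (1 : ℝ≥0∞) else 0)
        = fun p : ℝ × ℝ => if p.2 ≤ p.1 then (1 : ℝ≥0∞) else 0 := rfl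
    rw [this]
    exact Measurable.ite (measurableSet_le measurable_snd measurable_fst) measurable_const
      measurable_const
  have h1 : ∀ s : ℝ, μ (Set.Iic s) = ∫⁻ x, (if x ≤ s then (1 : ℝ≥0∞) else 0) ∂μ := by
    intro s
    have : (fun x : ℝ => if x ≤ s then (1 : ℝ≥0∞) else 0)
        = (Set.Iic s).indicator (fun _ => (1 : ℝ≥0∞)) := by
      ext x; simp [Set.indicator, Set.mem_Iic]
    rw [this]
    exact (lintegral_indicator_one measurableSet_Iic).symm
  calc ∫⁻ s in Set.Iic t, μ (Set.Iic s)
      = ∫⁻ s in Set.Iic t, ∫⁻ x, (if x ≤ s then (1 : ℝ≥0∞) else 0) ∂μ :=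
        lintegral_congr fun s => h1 s
    _ = ∫⁻ x, (∫⁻ s in Set.Iic t, if x ≤ s then (1 : ℝ≥0∞) else 0) ∂μ :=
        lintegral_lintegral_swap hg.aemeasurable
    _ = ∫⁻ x, ENNReal.ofReal (t - x) ∂μ := by
        refine lintegral_congr fun x => ?_
        have h2 : (fun s : ℝ => if x ≤ s then (1 : ℝ≥0∞) else 0)
            = (Set.Ici x).indicator (fun _ => (1 : ℝ≥0∞)) := by
          ext s; simp [Set.indicator, Set.mem_Ici]
        rw [h2]
        have h3 : ∫⁻ s, (Set.Ici x).indicator (fun _ => (1 : ℝ≥0∞)) s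
              ∂(volume.restrict (Set.Iic t)) = (volume.restrict (Set.Iic t)) (Set.Ici x) :=
          lintegral_indicator_one measurableSet_Ici
        rw [h3, Measure.restrict_apply measurableSet_Ici, Set.Ici_inter_Iic, Real.volume_Icc]

lemma aux_swap_Ici (μ : Measure ℝ) [IsFiniteMeasure μ] (t : ℝ) :
    ∫⁻ s in Set.Ici t, μ (Set.Ioi s) = ∫⁻ x, ENNReal.ofReal (x - t) ∂μ := by
  have hg : Measurable (Function.uncurry fun (s x : ℝ) => if s < x then (1 : ℝ≥0∞) else 0) := by
    have : (Function.uncurry fun (s x : ℝ) => if s < x then (1 : ℝ≥0∞) else 0)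
        = fun p : ℝ × ℝ => if p.1 < p.2 then (1 : ℝ≥0∞) else 0 := rfl
    rw [this]
    exact Measurable.ite (measurableSet_lt measurable_fst measurable_snd) measurable_const
      measurable_const
  have h1 : ∀ s : ℝ, μ (Set.Ioi s) = ∫⁻ x, (if s < x then (1 : ℝ≥0∞) else 0) ∂μ := by
    intro s
    have : (fun x : ℝ => if s < x then (1 : ℝ≥0∞) else 0)
        = (Set.Ioi s).indicator (fun _ => (1 : ℝ≥0∞)) := by
      ext x; simp [Set.indicator, Set.mem_Ioi]
    rw [this]
    exact (lintegral_indicator_one measurableSet_Ioi).symm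
  calc ∫⁻ s in Set.Ici t, μ (Set.Ioi s)
      = ∫⁻ s in Set.Ici t, ∫⁻ x, (if s < x then (1 : ℝ≥0∞) else 0) ∂μ :=
        lintegral_congr fun s => h1 s
    _ = ∫⁻ x, (∫⁻ s in Set.Ici t, if s < x then (1 : ℝ≥0∞) else 0) ∂μ :=
        lintegral_lintegral_swap hg.aemeasurable
    _ = ∫⁻ x, ENNReal.ofReal (x - t) ∂μ := by
        refine lintegral_congr fun x => ?_
        have h2 : (fun s : ℝ => if s < x then (1 : ℝ≥0∞) else 0)
            = (Set.Iio x).indicator (fun _ => (1 : ℝ≥0∞)) := by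
          ext s; simp [Set.indicator, Set.mem_Iio]
        rw [h2]
        have h3 : ∫⁻ s, (Set.Iio x).indicator (fun _ => (1 : ℝ≥0∞)) s
              ∂(volume.restrict (Set.Ici t)) = (volume.restrict (Set.Ici t)) (Set.Iio x) :=
          lintegral_indicator_one measurableSet_Iio
        rw [h3, Measure.restrict_apply measurableSet_Iio, Set.Iio_inter_Ici, Real.volume_Ico]

end Aux

section Aux2

variable (κ ν : Measure ℝ) [IsProbabilityMeasure κ] [IsProbabilityMeasure ν]

lemma fin_ofReal (hκ : Integrable (fun x : ℝ => x) κ) {f : ℝ → ℝ} (t : ℝ)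
    (hf : ∀ x, f x ≤ |t| + |x|) :
    ∫⁻ x, ENNReal.ofReal (f x) ∂κ ≠ ⊤ := by
  have hb : ∀ x, ENNReal.ofReal (f x) ≤ ENNReal.ofReal |t| + ‖x‖₊ := fun x => by
    rw [← enorm_eq_nnnorm, Real.enorm_eq_ofReal_abs]
    calc ENNReal.ofReal (f x) ≤ ENNReal.ofReal (|t| + |x|) := ENNReal.ofReal_le_ofReal (hf x)
      _ = ENNReal.ofReal |t| + ENNReal.ofReal |x| :=
        ENNReal.ofReal_add (abs_nonneg t) (abs_nonneg x)
  have h1 : ∫⁻ x, ENNReal.ofReal (f x) ∂κ ≤ ∫⁻ x, (ENNReal.ofReal |t| + ‖x‖₊) ∂κ :=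
    lintegral_mono hb
  have h2 : ∫⁻ x, (ENNReal.ofReal |t| + (‖x‖₊ : ℝ≥0∞)) ∂κ
      = ENNReal.ofReal |t| * κ Set.univ + ∫⁻ x, (‖x‖₊ : ℝ≥0∞) ∂κ := by
    rw [lintegral_add_left measurable_const, lintegral_const]
  have h3 : ∫⁻ x, (‖x‖₊ : ℝ≥0∞) ∂κ < ⊤ := hκ.2
  refine ne_of_lt (lt_of_le_of_lt h1 ?_)
  rw [h2, measure_univ, mul_one]
  exact ENNReal.add_lt_top.2 ⟨ENNReal.ofReal_lt_top, h3⟩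

lemma int_maxL (hκ : Integrable (fun x : ℝ => x) κ) (t : ℝ) :
    Integrable (fun x => max (t - x) 0) κ := by
  refine Integrable.mono' ((integrable_const |t|).add hκ.abs)
    (((measurable_const.sub measurable_id).max measurable_const).aestronglyMeasurable)
    (ae_of_all _ fun x => ?_)
  simp only [Real.norm_eq_abs, abs_max_sub_max_le_abs]
  rw [abs_of_nonneg (le_max_right _ _)]
  rcases le_total (t - x) 0 with h | h
  · rw [max_eq_right h]
    have := abs_nonneg t; have := abs_nonneg x
    simp only [Pi.add_apply]; linarith
  · rw [max_eq_left h]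
    calc t - x ≤ |t - x| := le_abs_self _
      _ ≤ |t| + |x| := abs_sub _ _

lemma int_maxR (hκ : Integrable (fun x : ℝ => x) κ) (t : ℝ) :
    Integrable (fun x => max (x - t) 0) κ := by
  refine Integrable.mono' ((integrable_const |t|).add hκ.abs)
    (((measurable_id.sub measurable_const).max measurable_const).aestronglyMeasurable)
    (ae_of_all _ fun x => ?_)
  simp only [Real.norm_eq_abs]
  rw [abs_of_nonneg (le_max_right _ _)]
  rcases le_total (x - t) 0 with h | h
  · rw [max_eq_right h]
    have := abs_nonneg t; have := abs_nonneg x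
    simp only [Pi.add_apply]; linarith
  · rw [max_eq_left h]
    calc x - t ≤ |x - t| := le_abs_self _
      _ ≤ |x| + |t| := abs_sub _ _
      _ = |t| + |x| := add_comm _ _

lemma area_repr (t : ℝ) :
    ∫ s in Set.Iic t, cdf κ s = (∫⁻ s in Set.Iic t, κ (Set.Iic s)).toReal := by
  rw [integral_eq_lintegral_of_nonneg_ae (ae_of_all _ fun s => cdf_nonneg κ s)
    ((cdf κ).mono.measurable.aestronglyMeasurable.restrict)]
  congr 1
  exact lintegral_congr fun s => ofReal_cdf κ s

lemma headA (t : ℝ) :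
    ∫ x, max (t - x) 0 ∂κ = (∫⁻ x, ENNReal.ofReal (t - x) ∂κ).toReal := by
  have hm : Measurable fun x : ℝ => max (t - x) 0 := by fun_prop
  rw [integral_eq_lintegral_of_nonneg_ae (f := fun x : ℝ => max (t - x) 0) (ae_of_all _ fun x => le_max_right _ _)
    hm.aestronglyMeasurable]
  congr 1
  refine lintegral_congr fun x => ?_
  rcases le_total (t - x) 0 with h | h
  · rw [max_eq_right h, ENNReal.ofReal_zero, ENNReal.ofReal_of_nonpos h]
  · rw [max_eq_left h]

lemma tailB (t : ℝ) :
    ∫ x, max (x - t) 0 ∂κ = (∫⁻ x, ENNReal.ofReal (x - t) ∂κ).toReal := by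
  have hm : Measurable fun x : ℝ => max (x - t) 0 := by fun_prop
  rw [integral_eq_lintegral_of_nonneg_ae (f := fun x : ℝ => max (x - t) 0) (ae_of_all _ fun x => le_max_right _ _)
    hm.aestronglyMeasurable]
  congr 1
  refine lintegral_congr fun x => ?_
  rcases le_total (x - t) 0 with h | h
  · rw [max_eq_right h, ENNReal.ofReal_zero, ENNReal.ofReal_of_nonpos h]
  · rw [max_eq_left h]

lemma headA_eq (hκ : Integrable (fun x : ℝ => x) κ) (t : ℝ) :
    ∫ x, max (t - x) 0 ∂κ = t - (∫ x, x ∂κ) + ∫ x, max (x - t) 0 ∂κ := by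
  have h := integral_sub (int_maxL κ hκ t) (int_maxR κ hκ t)
  have h2 : (fun x => max (t - x) 0 - max (x - t) 0) = fun x : ℝ => t - x := by
    ext x
    rcases le_total (t - x) 0 with h | h
    · rw [max_eq_right h, max_eq_left (by linarith)]; linarith
    · rw [max_eq_left h, max_eq_right (by linarith)]; linarith
  rw [h2] at h
  have h3 : ∫ x, (t - x) ∂κ = t - ∫ x, x ∂κ := by
    rw [integral_sub (integrable_const t) hκ, integral_const, probReal_univ]
    simp
  linarith [h, h3]

end Aux2

section Aux3

variable (κ ν : Measure ℝ) [IsProbabilityMeasure κ] [IsProbabilityMeasure ν]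

lemma key_le (hν : Integrable (fun x : ℝ => x) ν) (t : ℝ)
    (h : ∀ s, s ≤ t → κ (Set.Iic s) ≤ ν (Set.Iic s)) :
    ∫ s in Set.Iic t, cdf κ s ≤ ∫ s in Set.Iic t, cdf ν s := by
  rw [area_repr, area_repr]
  have hfin : ∫⁻ s in Set.Iic t, ν (Set.Iic s) ≠ ⊤ := by
    rw [aux_swap_Iic]
    exact fin_ofReal ν hν t fun x => (le_abs_self _).trans (abs_sub t x)
  have hmono : Monotone fun s : ℝ => ν (Set.Iic s) := fun a c hac =>
    measure_mono (Set.Iic_subset_Iic.2 hac)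
  exact ENNReal.toReal_mono hfin (setLIntegral_mono hmono.measurable fun s hs => h s hs)

lemma prob_Ioi (s : ℝ) : κ (Set.Ioi s) = 1 - κ (Set.Iic s) := by
  rw [← Set.compl_Iic, measure_compl measurableSet_Iic (measure_ne_top κ _), measure_univ]

lemma key_ge (hκ : Integrable (fun x : ℝ => x) κ) (hν : Integrable (fun x : ℝ => x) ν)
    (hmean : ∫ x, x ∂κ = ∫ x, x ∂ν) (t : ℝ)
    (h : ∀ s, t ≤ s → ν (Set.Iic s) ≤ κ (Set.Iic s)) :
    ∫ s in Set.Iic t, cdf κ s ≤ ∫ s in Set.Iic t, cdf ν s := by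
  rw [area_repr, area_repr, aux_swap_Iic, aux_swap_Iic, ← headA, ← headA,
    headA_eq κ hκ, headA_eq ν hν, hmean]
  have hB : ∫ x, max (x - t) 0 ∂κ ≤ ∫ x, max (x - t) 0 ∂ν := by
    rw [tailB, tailB, ← aux_swap_Ici, ← aux_swap_Ici]
    have hfin : ∫⁻ s in Set.Ici t, ν (Set.Ioi s) ≠ ⊤ := by
      rw [aux_swap_Ici]
      exact fin_ofReal ν hν t fun x => (le_abs_self _).trans ((abs_sub x t).trans
        (by rw [add_comm]))
    have hanti : Antitone fun s : ℝ => ν (Set.Ioi s) := fun a c hac =>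
      measure_mono (Set.Ioi_subset_Ioi hac)
    refine ENNReal.toReal_mono hfin (setLIntegral_mono hanti.measurable fun s hs => ?_)
    rw [prob_Ioi κ, prob_Ioi ν]
    exact tsub_le_tsub_left (h s hs) 1
  linarith

end Aux3

/-- The key step in the proof of Proposition 8: `F*`, the unique element of `𝓕_B` with mean
`E[Y]`, dominates at the second order every integrable distribution `F` with
`F_{ψ_U} ≤ F ≤ F_{ψ_L}` pointwise and mean `E[Y]`. -/
theorem Fstar_dominates_secondOrder
    {Ω Ω' : Type*} [MeasurableSpace Ω] [MeasurableSpace Ω']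
    (P : Measure Ω) (P' : Measure Ω')
    [IsProbabilityMeasure P] [IsProbabilityMeasure P']
    {ψL ψU : Ω → ℝ} {Y : Ω' → ℝ}
    (hψLm : Measurable ψL) (hψUm : Measurable ψU)
    (hψLi : Integrable ψL P) (hψUi : Integrable ψU P)
    (hle : ∀ ω, ψL ω ≤ ψU ω)
    (hYm : Measurable Y) (hYi : Integrable Y P')
    (hlow : ∫ ω, ψL ω ∂P ≤ ∫ ω, Y ω ∂P')
    (hup : ∫ ω, Y ω ∂P' ≤ ∫ ω, ψU ω ∂P)
    (μstar : Measure ℝ) (hμstar : μstar ∈ FB P ψL ψU)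
    (hμstarMean : ∫ x : ℝ, x ∂μstar = ∫ ω, Y ω ∂P') :
    ∀ ν : Measure ℝ, IsProbabilityMeasure ν → Integrable (fun x : ℝ => x) ν →
      (∀ t : ℝ, cdf (P.map ψU) t ≤ cdf ν t ∧ cdf ν t ≤ cdf (P.map ψL) t) →
      (∫ x : ℝ, x ∂ν = ∫ ω, Y ω ∂P') →
      ∀ t : ℝ, ∫ s in Set.Iic t, cdf μstar s ≤ ∫ s in Set.Iic t, cdf ν s := by
  intro ν hνP hνi hsand hνmean t
  haveI := hνP
  haveI hPL : IsProbabilityMeasure (P.map ψL) := Measure.isProbabilityMeasure_map hψLm.aemeasurable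
  haveI hPU : IsProbabilityMeasure (P.map ψU) := Measure.isProbabilityMeasure_map hψUm.aemeasurable
  -- convert cdf inequalities to measure inequalities
  have hUν : ∀ s : ℝ, (P.map ψU) (Set.Iic s) ≤ ν (Set.Iic s) := by
    intro s
    have h := (hsand s).1
    rw [cdf_eq_real, cdf_eq_real] at h
    exact (ENNReal.toReal_le_toReal (measure_ne_top _ _) (measure_ne_top _ _)).1 h
  have hνL : ∀ s : ℝ, ν (Set.Iic s) ≤ (P.map ψL) (Set.Iic s) := by
    intro s
    have h := (hsand s).2
    rw [cdf_eq_real, cdf_eq_real] at h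
    exact (ENNReal.toReal_le_toReal (measure_ne_top _ _) (measure_ne_top _ _)).1 h
  rcases hμstar with ⟨b, rfl⟩ | rfl | rfl
  · -- μstar = P.map (psiB ψL ψU b)
    have hpsiBm : Measurable (psiB ψL ψU b) :=
      Measurable.ite (measurableSet_lt hψUm measurable_const) hψUm (measurable_const.max hψLm)
    have hbounds : ∀ ω, ψL ω ≤ psiB ψL ψU b ω ∧ psiB ψL ψU b ω ≤ ψU ω := by
      intro ω
      unfold psiB
      split_ifs with h
      · exact ⟨hle ω, le_refl _⟩
      · exact ⟨le_max_right _ _, max_le (not_lt.1 h) (hle ω)⟩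
    have hpsiBi : Integrable (psiB ψL ψU b) P := by
      refine Integrable.mono' (hψLi.abs.add hψUi.abs) hpsiBm.aestronglyMeasurable
        (ae_of_all _ fun ω => ?_)
      rw [Real.norm_eq_abs, abs_le]
      have h1 := (hbounds ω).1
      have h2 := (hbounds ω).2
      have h3 := neg_abs_le (ψL ω)
      have h4 := le_abs_self (ψU ω)
      have h5 := abs_nonneg (ψL ω)
      have h6 := abs_nonneg (ψU ω)
      constructor <;> [skip; skip] <;> simp only [Pi.add_apply] <;> linarith
    haveI hPB : IsProbabilityMeasure (P.map (psiB ψL ψU b)) :=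
      Measure.isProbabilityMeasure_map hpsiBm.aemeasurable
    have hlt : ∀ s : ℝ, s < b →
        (P.map (psiB ψL ψU b)) (Set.Iic s) = (P.map ψU) (Set.Iic s) := by
      intro s hs
      rw [Measure.map_apply hpsiBm measurableSet_Iic, Measure.map_apply hψUm measurableSet_Iic]
      congr 1
      ext ω
      simp only [Set.mem_preimage, Set.mem_Iic, psiB]
      split_ifs with h
      · rfl
      · have hb : b ≤ ψU ω := not_lt.1 h
        have hmb := le_max_left b (ψL ω)
        constructor <;> intro h' <;> linarith
    have hge : ∀ s : ℝ, b ≤ s →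
        (P.map (psiB ψL ψU b)) (Set.Iic s) = (P.map ψL) (Set.Iic s) := by
      intro s hs
      rw [Measure.map_apply hpsiBm measurableSet_Iic, Measure.map_apply hψLm measurableSet_Iic]
      congr 1
      ext ω
      simp only [Set.mem_preimage, Set.mem_Iic, psiB]
      split_ifs with h
      · have := hle ω
        constructor <;> intro h' <;> linarith
      · rw [max_le_iff]
        constructor
        · exact fun h' => h'.2
        · exact fun h' => ⟨hs, h'⟩
    rcases le_or_gt b t with hbt | htb
    · -- t ≥ b : use key_ge
      have hκi : Integrable (fun x : ℝ => x) (P.map (psiB ψL ψU b)) :=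
        (integrable_map_measure aestronglyMeasurable_id hpsiBm.aemeasurable).2 hpsiBi
      refine key_ge _ ν hκi hνi (hμstarMean.trans hνmean.symm) t fun s hs => ?_
      rw [hge s (hbt.trans hs)]
      exact hνL s
    · -- t < b : use key_le
      refine key_le _ ν hνi t fun s hs => ?_
      rw [hlt s (lt_of_le_of_lt hs htb)]
      exact hUν s
  · -- μstar = P.map ψL
    have hκi : Integrable (fun x : ℝ => x) (P.map ψL) :=
      (integrable_map_measure aestronglyMeasurable_id hψLm.aemeasurable).2 hψLi
    exact key_ge _ ν hκi hνi (hμstarMean.trans hνmean.symm) t fun s _ => hνL s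
  · -- μstar = P.map ψU
    exact key_le _ ν hνi t fun s _ => hUν s
end

section
/- Let (Y, ψ, X, D) be random variables on a common probability space, with Y and ψ integrable real random variables, X a random vector in ℝ^{d_X}, and D taking values in {0, 1}. Assume D is conditionally independent of (Y, ψ) given X, and let p(X) be a version of E[D | X] with 0 < p(X) < 1 almost surely. Define W = D/p(X) − (1 − D)/(1 − p(X)) and Ỹ = DY + (1 − D)ψ. Then, almost surely, E[W(y − Ỹ)⁺ | X] = E[(y − Y)⁺ | X] − E[(y − ψ)⁺ | X] for all y ∈ ℝ and E[WỸ | X] = E[Y − ψ | X]. Consequently, the conditional moment conditions 'almost surely, E[(y − Y)⁺ | X] ≥ E[(y − ψ)⁺ | X] for all y ∈ ℝ and E[Y | X] = E[ψ | X]' hold if and only if 'almost surely, E[W(y − Ỹ)⁺ | X] ≥ 0 for all y ∈ ℝ and E[WỸ | X] = 0'. -/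
open MeasureTheory ProbabilityTheory
open scoped ENNReal NNReal

/-- The weighting variable `W = D/p(X) - (1 - D)/(1 - p(X))`, with `pX = p ∘ X`. -/
noncomputable def Wfun {Ω : Type*} (D pX : Ω → ℝ) (ω : Ω) : ℝ :=
  D ω / pX ω - (1 - D ω) / (1 - pX ω)

/-- `Ỹ = D Y + (1 - D) ψ`. -/
def Ytilde {Ω : Type*} (D Y ψ : Ω → ℝ) (ω : Ω) : ℝ := D ω * Y ω + (1 - D ω) * ψ ω

section Aux

variable {Ω : Type*} {m : MeasurableSpace Ω} [mΩ : MeasurableSpace Ω]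

/-- Indicator-level conditional-independence consequence. -/
theorem aux_key0 (hm : m ≤ mΩ) (P : Measure Ω) [IsProbabilityMeasure P]
    {Y ψ D pq : Ω → ℝ}
    (hYm : Measurable Y) (hψm : Measurable ψ) (hDm : Measurable D)
    (hD01 : ∀ ω, D ω = 0 ∨ D ω = 1)
    (hpqm : Measurable[m] pq)
    (hp : pq =ᵐ[P] P[D | m])
    (hp01 : ∀ᵐ ω ∂P, 0 < pq ω ∧ pq ω < 1)
    (hCI : ∀ (A : Set ℝ) (B : Set (ℝ × ℝ)), MeasurableSet A → MeasurableSet B →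
      P[fun ω => Set.indicator A (fun _ => (1 : ℝ)) (D ω) *
            Set.indicator B (fun _ => (1 : ℝ)) (Y ω, ψ ω) | m]
        =ᵐ[P] fun ω =>
          (P[fun ω' => Set.indicator A (fun _ => (1 : ℝ)) (D ω') | m]) ω *
          (P[fun ω' => Set.indicator B (fun _ => (1 : ℝ)) (Y ω', ψ ω') | m]) ω) :
    ∀ (B : Set (ℝ × ℝ)), MeasurableSet B → ∀ S : Set Ω, MeasurableSet[m] S →
      ∫ ω in S, D ω * Set.indicator B (fun _ => (1:ℝ)) (Y ω, ψ ω) ∂P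
        = ∫ ω in S, (max 0 (min (pq ω) 1)) * Set.indicator B (fun _ => (1:ℝ)) (Y ω, ψ ω) ∂P := by
  haveI : SigmaFinite (P.trim hm) := by
    haveI := isFiniteMeasure_trim (μ := P) hm
    infer_instance
  set q : Ω → ℝ := fun ω => max 0 (min (pq ω) 1) with hq_def
  have hqme : Measurable[m] q := measurable_const.max (hpqm.min measurable_const)
  have hqMe : Measurable q := hqme.mono hm le_rfl
  have hqae : q =ᵐ[P] pq := by
    filter_upwards [hp01] with ω h
    simp [hq_def, min_eq_left h.2.le, max_eq_right h.1.le]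
  have hqD : q =ᵐ[P] P[D|m] := hqae.trans hp
  intro B hB S hS
  have hSm : MeasurableSet S := hm S hS
  set IB : Ω → ℝ := fun ω => Set.indicator B (fun _ => (1:ℝ)) (Y ω, ψ ω) with hIB_def
  have hIBm : Measurable IB := (measurable_const.indicator hB).comp (hYm.prodMk hψm)
  have hIBbd : ∀ ω, ‖IB ω‖ ≤ 1 := by
    intro ω
    simp only [hIB_def, Set.indicator, Real.norm_eq_abs]
    split <;> simp
  have hIBi : Integrable IB P :=
    (integrable_const (1:ℝ)).mono' hIBm.aestronglyMeasurable
      (Filter.Eventually.of_forall fun ω => by simpa using hIBbd ω)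
  have hDbd : ∀ ω, ‖D ω‖ ≤ 1 := by
    intro ω; rcases hD01 ω with h | h <;> simp [h]
  have hqbd : ∀ ω, ‖q ω‖ ≤ 1 := by
    intro ω
    rw [Real.norm_eq_abs, abs_of_nonneg (le_max_left _ _)]
    exact max_le zero_le_one (min_le_right _ _)
  have hDIBi : Integrable (fun ω => D ω * IB ω) P :=
    hIBi.bdd_mul hDm.aestronglyMeasurable (Filter.Eventually.of_forall hDbd)
  have hqIBi : Integrable (fun ω => q ω * IB ω) P :=
    hIBi.bdd_mul hqMe.aestronglyMeasurable (Filter.Eventually.of_forall hqbd)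
  have hDind : ∀ ω, Set.indicator {(1:ℝ)} (fun _ => (1:ℝ)) (D ω) = D ω := by
    intro ω; rcases hD01 ω with h | h <;> simp [h]
  have h1 : P[fun ω => D ω * IB ω | m]
      =ᵐ[P] fun ω => (P[D|m]) ω * (P[IB|m]) ω := by
    have := hCI {1} B (measurableSet_singleton 1) hB
    simpa only [hDind] using this
  have hpull : P[fun ω => q ω * IB ω | m] =ᵐ[P] fun ω => q ω * (P[IB|m]) ω :=
    condExp_mul_of_stronglyMeasurable_left hqme.stronglyMeasurable hqIBi hIBi
  calc ∫ ω in S, D ω * IB ω ∂P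
      = ∫ ω in S, (P[fun ω => D ω * IB ω | m]) ω ∂P := (setIntegral_condExp hm hDIBi hS).symm
    _ = ∫ ω in S, q ω * (P[IB|m]) ω ∂P := by
        refine setIntegral_congr_ae hSm ?_
        filter_upwards [h1, hqD] with ω h hq' _
        rw [h, ← hq']
    _ = ∫ ω in S, (P[fun ω => q ω * IB ω | m]) ω ∂P := by
        refine setIntegral_congr_ae hSm ?_
        filter_upwards [hpull] with ω h _
        rw [h]
    _ = ∫ ω in S, q ω * IB ω ∂P := setIntegral_condExp hm hqIBi hS

end Aux

section Aux2

variable {Ω : Type*} {m : MeasurableSpace Ω} [mΩ : MeasurableSpace Ω]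

/-- Extension of the indicator-level identity to arbitrary measurable `g (Y, ψ)`. -/
theorem aux_key (hm : m ≤ mΩ) (P : Measure Ω) [IsProbabilityMeasure P]
    {Y ψ D q : Ω → ℝ}
    (hYm : Measurable Y) (hψm : Measurable ψ) (hDm : Measurable D) (hqMe : Measurable q)
    (hDnn : ∀ ω, 0 ≤ D ω) (hqnn : ∀ ω, 0 ≤ q ω)
    (hDbd : ∀ ω, ‖D ω‖ ≤ 1) (hqbd : ∀ ω, ‖q ω‖ ≤ 1)
    (hkey0 : ∀ (B : Set (ℝ × ℝ)), MeasurableSet B → ∀ S : Set Ω, MeasurableSet[m] S →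
      ∫ ω in S, D ω * Set.indicator B (fun _ => (1:ℝ)) (Y ω, ψ ω) ∂P
        = ∫ ω in S, q ω * Set.indicator B (fun _ => (1:ℝ)) (Y ω, ψ ω) ∂P) :
    ∀ (g : ℝ × ℝ → ℝ), Measurable g → ∀ S : Set Ω, MeasurableSet[m] S →
      ∫ ω in S, D ω * g (Y ω, ψ ω) ∂P = ∫ ω in S, q ω * g (Y ω, ψ ω) ∂P := by
  intro g hg S hS
  have hSm : MeasurableSet S := hm S hS
  set Z : Ω → ℝ × ℝ := fun ω => (Y ω, ψ ω) with hZ_def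
  have hZm : Measurable Z := hYm.prodMk hψm
  have lint : ∀ (c : Ω → ℝ), Measurable c → (∀ ω, 0 ≤ c ω) → (∀ ω, ‖c ω‖ ≤ 1) →
      ∀ (B : Set (ℝ × ℝ)), MeasurableSet B →
      (((P.restrict S).withDensity (fun ω => ((c ω).toNNReal : ℝ≥0∞))).map Z) B
        = ENNReal.ofReal (∫ ω in S, c ω * Set.indicator B (fun _ => (1:ℝ)) (Z ω) ∂P) := by
    intro c hc hc0 hcbd B hB
    have hci : Integrable c (P.restrict (S ∩ Z ⁻¹' B)) :=
      (integrable_const (1:ℝ)).mono' hc.aestronglyMeasurable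
        (Filter.Eventually.of_forall fun ω => by simpa using hcbd ω)
    calc (((P.restrict S).withDensity (fun ω => ((c ω).toNNReal : ℝ≥0∞))).map Z) B
        = ∫⁻ ω in S ∩ Z ⁻¹' B, ENNReal.ofReal (c ω) ∂P := by
          rw [Measure.map_apply hZm hB, withDensity_apply _ (hZm hB),
            Measure.restrict_restrict (hZm hB), Set.inter_comm]
          rfl
      _ = ENNReal.ofReal (∫ ω in S ∩ Z ⁻¹' B, c ω ∂P) :=
          (ofReal_integral_eq_lintegral_ofReal hci
            (Filter.Eventually.of_forall fun ω => hc0 ω)).symm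
      _ = ENNReal.ofReal (∫ ω in S, c ω * Set.indicator B (fun _ => (1:ℝ)) (Z ω) ∂P) := by
          rw [← setIntegral_indicator (hZm hB)]
          congr 1
          refine integral_congr_ae (Filter.Eventually.of_forall fun ω => ?_)
          by_cases h : Z ω ∈ B <;> simp [Set.indicator, h]
  have hνeq : ((P.restrict S).withDensity (fun ω => ((D ω).toNNReal : ℝ≥0∞))).map Z
      = ((P.restrict S).withDensity (fun ω => ((q ω).toNNReal : ℝ≥0∞))).map Z := by
    refine Measure.ext fun B hB => ?_
    rw [lint D hDm hDnn hDbd B hB, lint q hqMe hqnn hqbd B hB]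
    exact congrArg _ (hkey0 B hB S hS)
  have transfer : ∀ (c : Ω → ℝ), Measurable c → (∀ ω, 0 ≤ c ω) →
      ∫ v, g v ∂(((P.restrict S).withDensity (fun ω => ((c ω).toNNReal : ℝ≥0∞))).map Z)
        = ∫ ω in S, c ω * g (Z ω) ∂P := by
    intro c hc hc0
    rw [integral_map hZm.aemeasurable hg.stronglyMeasurable.aestronglyMeasurable,
      integral_withDensity_eq_integral_smul hc.real_toNNReal]
    refine integral_congr_ae (Filter.Eventually.of_forall fun ω => ?_)
    simp [NNReal.smul_def, Real.coe_toNNReal', max_eq_left (hc0 ω)]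
  calc ∫ ω in S, D ω * g (Y ω, ψ ω) ∂P
      = ∫ v, g v ∂(((P.restrict S).withDensity (fun ω => ((D ω).toNNReal : ℝ≥0∞))).map Z) :=
        (transfer D hDm hDnn).symm
    _ = ∫ v, g v ∂(((P.restrict S).withDensity (fun ω => ((q ω).toNNReal : ℝ≥0∞))).map Z) := by
        rw [hνeq]
    _ = ∫ ω in S, q ω * g (Y ω, ψ ω) ∂P := transfer q hqMe hqnn

end Aux2

section Aux3

variable {Ω : Type*} {m : MeasurableSpace Ω} [mΩ : MeasurableSpace Ω]

/-- `E[D g(Y,ψ) | m] = q E[g(Y,ψ) | m]` a.e. -/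
theorem aux_condD (hm : m ≤ mΩ) (P : Measure Ω) [IsProbabilityMeasure P]
    {Y ψ D q : Ω → ℝ}
    (hYm : Measurable Y) (hψm : Measurable ψ) (hDm : Measurable D)
    (hqme : Measurable[m] q)
    (hDbd : ∀ ω, ‖D ω‖ ≤ 1) (hqbd : ∀ ω, ‖q ω‖ ≤ 1)
    (hkey : ∀ (g : ℝ × ℝ → ℝ), Measurable g → ∀ S : Set Ω, MeasurableSet[m] S →
      ∫ ω in S, D ω * g (Y ω, ψ ω) ∂P = ∫ ω in S, q ω * g (Y ω, ψ ω) ∂P)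
    (g : ℝ × ℝ → ℝ) (hg : Measurable g) (hgi : Integrable (fun ω => g (Y ω, ψ ω)) P) :
    P[fun ω => D ω * g (Y ω, ψ ω) | m]
      =ᵐ[P] fun ω => q ω * (P[fun ω' => g (Y ω', ψ ω') | m]) ω := by
  haveI : SigmaFinite (P.trim hm) := by
    haveI := isFiniteMeasure_trim (μ := P) hm
    infer_instance
  have hqMe : Measurable q := hqme.mono hm le_rfl
  have hDg : Integrable (fun ω => D ω * g (Y ω, ψ ω)) P :=
    hgi.bdd_mul hDm.aestronglyMeasurable (Filter.Eventually.of_forall hDbd)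
  have hqg : Integrable (fun ω => q ω * g (Y ω, ψ ω)) P :=
    hgi.bdd_mul hqMe.aestronglyMeasurable (Filter.Eventually.of_forall hqbd)
  have step : P[fun ω => q ω * g (Y ω, ψ ω) | m]
      =ᵐ[P] P[fun ω => D ω * g (Y ω, ψ ω) | m] := by
    refine ae_eq_condExp_of_forall_setIntegral_eq hm hDg
      (fun s _ _ => integrable_condExp.integrableOn) (fun s hs _ => ?_)
      stronglyMeasurable_condExp.aestronglyMeasurable
    rw [setIntegral_condExp hm hqg hs]
    exact (hkey g hg s hs).symm
  have pull : P[fun ω => q ω * g (Y ω, ψ ω) | m]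
      =ᵐ[P] q * P[fun ω' => g (Y ω', ψ ω') | m] :=
    condExp_mul_of_stronglyMeasurable_left hqme.stronglyMeasurable hqg hgi
  exact step.symm.trans pull

end Aux3

section Aux4

variable {Ω : Type*} {m : MeasurableSpace Ω} [mΩ : MeasurableSpace Ω]

theorem aux_main (hm : m ≤ mΩ) (P : Measure Ω) [IsProbabilityMeasure P]
    {Y ψ D pq : Ω → ℝ}
    (hYm : Measurable Y) (hψm : Measurable ψ) (hDm : Measurable D)
    (hD01 : ∀ ω, D ω = 0 ∨ D ω = 1)
    (hpqm : Measurable[m] pq)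
    (hp : pq =ᵐ[P] P[D | m])
    (hp01 : ∀ᵐ ω ∂P, 0 < pq ω ∧ pq ω < 1)
    (hCI : ∀ (A : Set ℝ) (B : Set (ℝ × ℝ)), MeasurableSet A → MeasurableSet B →
      P[fun ω => Set.indicator A (fun _ => (1 : ℝ)) (D ω) *
            Set.indicator B (fun _ => (1 : ℝ)) (Y ω, ψ ω) | m]
        =ᵐ[P] fun ω =>
          (P[fun ω' => Set.indicator A (fun _ => (1 : ℝ)) (D ω') | m]) ω *
          (P[fun ω' => Set.indicator B (fun _ => (1 : ℝ)) (Y ω', ψ ω') | m]) ω)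
    (f : ℝ → ℝ) (hf : Measurable f)
    (hfY : Integrable (fun ω => f (Y ω)) P) (hfψ : Integrable (fun ω => f (ψ ω)) P)
    (hfW : Integrable (fun ω => Wfun D pq ω * f (Ytilde D Y ψ ω)) P) :
    P[fun ω => Wfun D pq ω * f (Ytilde D Y ψ ω) | m]
      =ᵐ[P] fun ω => (P[fun ω' => f (Y ω') | m]) ω - (P[fun ω' => f (ψ ω') | m]) ω := by
  haveI : SigmaFinite (P.trim hm) := by
    haveI := isFiniteMeasure_trim (μ := P) hm
    infer_instance
  set q : Ω → ℝ := fun ω => max 0 (min (pq ω) 1) with hq_def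
  have hqme : Measurable[m] q := measurable_const.max (hpqm.min measurable_const)
  have hqMe : Measurable q := hqme.mono hm le_rfl
  have hqnn : ∀ ω, 0 ≤ q ω := fun ω => le_max_left _ _
  have hqbd : ∀ ω, ‖q ω‖ ≤ 1 := by
    intro ω
    rw [Real.norm_eq_abs, abs_of_nonneg (hqnn ω)]
    exact max_le zero_le_one (min_le_right _ _)
  have hqae : q =ᵐ[P] pq := by
    filter_upwards [hp01] with ω h
    simp [hq_def, min_eq_left h.2.le, max_eq_right h.1.le]
  have hq01ae : ∀ᵐ ω ∂P, 0 < q ω ∧ q ω < 1 := by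
    filter_upwards [hp01, hqae] with ω h hq'
    rw [hq']; exact h
  have hDnn : ∀ ω, 0 ≤ D ω := by
    intro ω; rcases hD01 ω with h | h <;> simp [h]
  have hDbd : ∀ ω, ‖D ω‖ ≤ 1 := by
    intro ω; rcases hD01 ω with h | h <;> simp [h]
  have hkey0 := aux_key0 hm P hYm hψm hDm hD01 hpqm hp hp01 hCI
  have hkey := aux_key hm P hYm hψm hDm hqMe hDnn hqnn hDbd hqbd hkey0
  have hcondD := aux_condD hm P hYm hψm hDm hqme hDbd hqbd hkey
  -- specialized conditional expectation identities
  have hDfY : Integrable (fun ω => D ω * f (Y ω)) P :=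
    hfY.bdd_mul hDm.aestronglyMeasurable (Filter.Eventually.of_forall hDbd)
  have hDfψ : Integrable (fun ω => D ω * f (ψ ω)) P :=
    hfψ.bdd_mul hDm.aestronglyMeasurable (Filter.Eventually.of_forall hDbd)
  have h1Dfψ : Integrable (fun ω => (1 - D ω) * f (ψ ω)) P := by
    have hb : ∀ ω, ‖(1:ℝ) - D ω‖ ≤ 1 := by
      intro ω; rcases hD01 ω with h | h <;> simp [h]
    exact hfψ.bdd_mul (measurable_const.sub hDm).aestronglyMeasurable (Filter.Eventually.of_forall hb)
  have hcdY : P[fun ω => D ω * f (Y ω) | m]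
      =ᵐ[P] fun ω => q ω * (P[fun ω' => f (Y ω') | m]) ω :=
    hcondD (fun v => f v.1) (hf.comp measurable_fst) hfY
  have hcdψ : P[fun ω => D ω * f (ψ ω) | m]
      =ᵐ[P] fun ω => q ω * (P[fun ω' => f (ψ ω') | m]) ω :=
    hcondD (fun v => f v.2) (hf.comp measurable_snd) hfψ
  have hcd1ψ : P[fun ω => (1 - D ω) * f (ψ ω) | m]
      =ᵐ[P] fun ω => (1 - q ω) * (P[fun ω' => f (ψ ω') | m]) ω := by
    have hsub : (fun ω => (1 - D ω) * f (ψ ω))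
        = (fun ω => f (ψ ω)) - fun ω => D ω * f (ψ ω) := by
      funext ω; simp [Pi.sub_apply]; ring
    rw [hsub]
    refine (condExp_sub hfψ hDfψ m).trans ?_
    filter_upwards [hcdψ] with ω h1
    simp only [Pi.sub_apply]
    rw [h1]; ring
  -- pointwise decomposition
  have hpt : (fun ω => Wfun D pq ω * f (Ytilde D Y ψ ω)) =ᵐ[P]
      fun ω => (q ω)⁻¹ * (D ω * f (Y ω)) - (1 - q ω)⁻¹ * ((1 - D ω) * f (ψ ω)) := by
    filter_upwards [hqae] with ω hqω
    rcases hD01 ω with h | h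
    · have hYt : Ytilde D Y ψ ω = ψ ω := by simp [Ytilde, h]
      simp only [Wfun, hYt, h, hqω]; ring
    · have hYt : Ytilde D Y ψ ω = Y ω := by simp [Ytilde, h]
      simp only [Wfun, hYt, h, hqω]; ring
  -- integrability of the two pieces
  have hai : Integrable (fun ω => (q ω)⁻¹ * (D ω * f (Y ω))) P := by
    have hae : (fun ω => D ω * (Wfun D pq ω * f (Ytilde D Y ψ ω))) =ᵐ[P]
        fun ω => (q ω)⁻¹ * (D ω * f (Y ω)) := by
      filter_upwards [hqae] with ω hqω
      rcases hD01 ω with h | h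
      · simp [h]
      · have hYt : Ytilde D Y ψ ω = Y ω := by simp [Ytilde, h]
        simp only [Wfun, hYt, h, hqω]; ring
    exact (hfW.bdd_mul hDm.aestronglyMeasurable (Filter.Eventually.of_forall hDbd)).congr hae
  have hbi : Integrable (fun ω => (1 - q ω)⁻¹ * ((1 - D ω) * f (ψ ω))) P := by
    have hb : ∀ ω, ‖D ω - 1‖ ≤ 1 := by
      intro ω; rcases hD01 ω with h | h <;> simp [h]
    have hae : (fun ω => (D ω - 1) * (Wfun D pq ω * f (Ytilde D Y ψ ω))) =ᵐ[P]
        fun ω => (1 - q ω)⁻¹ * ((1 - D ω) * f (ψ ω)) := by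
      filter_upwards [hqae] with ω hqω
      rcases hD01 ω with h | h
      · have hYt : Ytilde D Y ψ ω = ψ ω := by simp [Ytilde, h]
        simp only [Wfun, hYt, h, hqω]; ring
      · simp [h]
    exact (hfW.bdd_mul (hDm.sub measurable_const).aestronglyMeasurable (Filter.Eventually.of_forall hb)).congr hae
  -- conditional expectations of the two pieces
  have eA : P[fun ω => (q ω)⁻¹ * (D ω * f (Y ω)) | m]
      =ᵐ[P] P[fun ω' => f (Y ω') | m] := by
    have pullA := condExp_mul_of_stronglyMeasurable_left (μ := P) (m := m)
      (f := fun ω => (q ω)⁻¹) (g := fun ω => D ω * f (Y ω))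
      hqme.inv.stronglyMeasurable hai hDfY
    refine pullA.trans ?_
    filter_upwards [hcdY, hq01ae] with ω h1 h2
    rw [Pi.mul_apply, h1, inv_mul_cancel_left₀ (ne_of_gt h2.1)]
  have eB : P[fun ω => (1 - q ω)⁻¹ * ((1 - D ω) * f (ψ ω)) | m]
      =ᵐ[P] P[fun ω' => f (ψ ω') | m] := by
    have pullB := condExp_mul_of_stronglyMeasurable_left (μ := P) (m := m)
      (f := fun ω => (1 - q ω)⁻¹) (g := fun ω => (1 - D ω) * f (ψ ω))
      (measurable_const.sub hqme).inv.stronglyMeasurable hbi h1Dfψ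
    refine pullB.trans ?_
    filter_upwards [hcd1ψ, hq01ae] with ω h1 h2
    rw [Pi.mul_apply, h1, inv_mul_cancel_left₀ (ne_of_gt (sub_pos.mpr h2.2))]
  refine (condExp_congr_ae hpt).trans ((condExp_sub hai hbi m).trans ?_)
  filter_upwards [eA, eB] with ω hA hB
  simp only [Pi.sub_apply]
  rw [hA, hB]

end Aux4

/-- Proposition 9 of the paper (sample selection / propensity-score reweighting): if `D` is
conditionally independent of `(Y, ψ)` given `X`, with propensity score `p(X) ∈ (0,1)` a.s.,
then a.s. `E[W(y - Ỹ)⁺ | X] = E[(y - Y)⁺ | X] - E[(y - ψ)⁺ | X]` for all `y` and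
`E[WỸ | X] = E[Y - ψ | X]`; consequently H₀X's conditional moment conditions hold iff the
reweighted conditional moment conditions hold. -/
theorem propensity_reweighting
    {Ω : Type*} [MeasurableSpace Ω] (P : Measure Ω) [IsProbabilityMeasure P]
    {d : ℕ} {Y ψ : Ω → ℝ} {X : Ω → Fin d → ℝ} {D : Ω → ℝ}
    (hYm : Measurable Y) (hψm : Measurable ψ) (hXm : Measurable X) (hDm : Measurable D)
    (hYi : Integrable Y P) (hψi : Integrable ψ P)
    (hD01 : ∀ ω, D ω = 0 ∨ D ω = 1)
    (p : (Fin d → ℝ) → ℝ) (hpm : Measurable p)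
    (hp : (fun ω => p (X ω)) =ᵐ[P] P[D | MeasurableSpace.comap X inferInstance])
    (hp01 : ∀ᵐ ω ∂P, 0 < p (X ω) ∧ p (X ω) < 1)
    -- conditional independence of `D` and `(Y, ψ)` given `X`:
    (hCI : ∀ (A : Set ℝ) (B : Set (ℝ × ℝ)), MeasurableSet A → MeasurableSet B →
      P[fun ω => Set.indicator A (fun _ => (1 : ℝ)) (D ω) *
            Set.indicator B (fun _ => (1 : ℝ)) (Y ω, ψ ω) |
          MeasurableSpace.comap X inferInstance]
        =ᵐ[P] fun ω =>
          (P[fun ω' => Set.indicator A (fun _ => (1 : ℝ)) (D ω') |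
              MeasurableSpace.comap X inferInstance]) ω *
          (P[fun ω' => Set.indicator B (fun _ => (1 : ℝ)) (Y ω', ψ ω') |
              MeasurableSpace.comap X inferInstance]) ω)
    -- integrability of the reweighted moments:
    (hWYpos : ∀ y : ℝ, Integrable
      (fun ω => Wfun D (fun ω' => p (X ω')) ω * max (y - Ytilde D Y ψ ω) 0) P)
    (hWYt : Integrable (fun ω => Wfun D (fun ω' => p (X ω')) ω * Ytilde D Y ψ ω) P) :
    (∀ y : ℝ,
      P[fun ω => Wfun D (fun ω' => p (X ω')) ω * max (y - Ytilde D Y ψ ω) 0 |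
          MeasurableSpace.comap X inferInstance]
        =ᵐ[P] fun ω =>
          (P[fun ω' => max (y - Y ω') 0 | MeasurableSpace.comap X inferInstance]) ω -
          (P[fun ω' => max (y - ψ ω') 0 | MeasurableSpace.comap X inferInstance]) ω) ∧
    (P[fun ω => Wfun D (fun ω' => p (X ω')) ω * Ytilde D Y ψ ω |
        MeasurableSpace.comap X inferInstance]
      =ᵐ[P] fun ω =>
        (P[Y | MeasurableSpace.comap X inferInstance]) ω -
        (P[ψ | MeasurableSpace.comap X inferInstance]) ω) ∧
    (((∀ y : ℝ,
        P[fun ω => max (y - ψ ω) 0 | MeasurableSpace.comap X inferInstance]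
          ≤ᵐ[P] P[fun ω => max (y - Y ω) 0 | MeasurableSpace.comap X inferInstance]) ∧
      P[Y | MeasurableSpace.comap X inferInstance]
        =ᵐ[P] P[ψ | MeasurableSpace.comap X inferInstance]) ↔
     ((∀ y : ℝ,
        (fun _ => (0 : ℝ)) ≤ᵐ[P]
          P[fun ω => Wfun D (fun ω' => p (X ω')) ω * max (y - Ytilde D Y ψ ω) 0 |
            MeasurableSpace.comap X inferInstance]) ∧
      P[fun ω => Wfun D (fun ω' => p (X ω')) ω * Ytilde D Y ψ ω |
          MeasurableSpace.comap X inferInstance]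
        =ᵐ[P] fun _ => (0 : ℝ))) := by
  have hm : MeasurableSpace.comap X inferInstance ≤ _ := hXm.comap_le
  have hpqm : Measurable[MeasurableSpace.comap X inferInstance] (fun ω => p (X ω)) :=
    hpm.comp (fun s hs => ⟨s, hs, rfl⟩)
  have hmaxint : ∀ (y : ℝ) (Z : Ω → ℝ), Measurable Z → Integrable Z P →
      Integrable (fun ω => max (y - Z ω) 0) P := by
    intro y Z hZm hZi
    refine ((integrable_const |y|).add hZi.abs).mono'
      ((measurable_const.sub hZm).max measurable_const).aestronglyMeasurable
      (Filter.Eventually.of_forall fun ω => ?_)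
    rw [Real.norm_eq_abs, abs_of_nonneg (le_max_right _ _)]
    simp only [Pi.add_apply]
    refine max_le ?_ (by positivity)
    have h1 := le_abs_self y
    have h2 := neg_le_abs (Z ω)
    linarith
  have part1 : ∀ y : ℝ,
      P[fun ω => Wfun D (fun ω' => p (X ω')) ω * max (y - Ytilde D Y ψ ω) 0 |
          MeasurableSpace.comap X inferInstance]
        =ᵐ[P] fun ω =>
          (P[fun ω' => max (y - Y ω') 0 | MeasurableSpace.comap X inferInstance]) ω -
          (P[fun ω' => max (y - ψ ω') 0 | MeasurableSpace.comap X inferInstance]) ω := by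
    intro y
    exact aux_main hm P hYm hψm hDm hD01 hpqm hp hp01 hCI
      (fun t => max (y - t) 0) ((measurable_const.sub measurable_id).max measurable_const)
      (hmaxint y Y hYm hYi) (hmaxint y ψ hψm hψi) (hWYpos y)
  have part2 :
      P[fun ω => Wfun D (fun ω' => p (X ω')) ω * Ytilde D Y ψ ω |
          MeasurableSpace.comap X inferInstance]
        =ᵐ[P] fun ω =>
          (P[Y | MeasurableSpace.comap X inferInstance]) ω -
          (P[ψ | MeasurableSpace.comap X inferInstance]) ω :=
    aux_main hm P hYm hψm hDm hD01 hpqm hp hp01 hCI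
      (fun t => t) measurable_id hYi hψi hWYt
  refine ⟨part1, part2, ?_, ?_⟩
  · rintro ⟨H1, H2⟩
    constructor
    · intro y
      filter_upwards [part1 y, H1 y] with ω e h
      rw [e]
      show (0:ℝ) ≤ _
      linarith
    · filter_upwards [part2, H2] with ω e h
      rw [e, h, sub_self]
  · rintro ⟨H1, H2⟩
    constructor
    · intro y
      filter_upwards [part1 y, H1 y] with ω e h
      rw [e] at h
      linarith
    · filter_upwards [part2, H2] with ω e h
      rw [e] at h
      linarith
end

section
/- Let Y be a random variable taking values in {0, 1} almost surely and ψ a random variable taking values in [0, 1] almost surely, with E[Y] = E[ψ]. Then for every y ∈ ℝ, E[(y − Y)⁺] ≥ E[(y − ψ)⁺]. In particular, when the outcome is binary, the moment equality E[Y] = E[ψ] alone implies all the moment inequalities characterizing H₀. -/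
open MeasureTheory ProbabilityTheory

/-- For a binary outcome `Y ∈ {0,1}` and beliefs `ψ ∈ [0,1]` with `E[Y] = E[ψ]`, all the
moment inequalities `E[(y - Y)⁺] ≥ E[(y - ψ)⁺]` characterizing H₀ hold automatically. -/
theorem binary_outcome_moment_inequalities
    {Ω₁ Ω₂ : Type*} [MeasurableSpace Ω₁] [MeasurableSpace Ω₂]
    (P₁ : Measure Ω₁) (P₂ : Measure Ω₂)
    [IsProbabilityMeasure P₁] [IsProbabilityMeasure P₂]
    {Y : Ω₁ → ℝ} {ψ : Ω₂ → ℝ}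
    (hYm : Measurable Y) (hψm : Measurable ψ)
    (hY01 : ∀ᵐ ω ∂P₁, Y ω = 0 ∨ Y ω = 1)
    (hψ01 : ∀ᵐ ω ∂P₂, ψ ω ∈ Set.Icc (0 : ℝ) 1)
    (hmean : ∫ ω, Y ω ∂P₁ = ∫ ω, ψ ω ∂P₂) :
    ∀ y : ℝ, ∫ ω, max (y - ψ ω) 0 ∂P₂ ≤ ∫ ω, max (y - Y ω) 0 ∂P₁ := by
  intro y
  set a : ℝ := max y 0 with ha
  set b : ℝ := max (y - 1) 0 with hb
  -- integrability of ψ and Y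
  have hψint : Integrable ψ P₂ := by
    refine ⟨hψm.aestronglyMeasurable, ?_⟩
    apply MeasureTheory.HasFiniteIntegral.of_bounded (C := 1)
    filter_upwards [hψ01] with ω hω
    rw [Real.norm_eq_abs, abs_le]
    constructor <;> linarith [hω.1, hω.2]
  have hYint : Integrable Y P₁ := by
    refine ⟨hYm.aestronglyMeasurable, ?_⟩
    apply MeasureTheory.HasFiniteIntegral.of_bounded (C := 1)
    filter_upwards [hY01] with ω hω
    rw [Real.norm_eq_abs, abs_le]
    rcases hω with h | h <;> rw [h] <;> norm_num
  -- the affine majorant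
  have hg2int : Integrable (fun ω => a + ψ ω * (b - a)) P₂ :=
    (integrable_const a).add (hψint.mul_const _)
  have hg1int : Integrable (fun ω => a + Y ω * (b - a)) P₁ :=
    (integrable_const a).add (hYint.mul_const _)
  -- pointwise inequality for t ∈ [0,1]
  have key : ∀ t : ℝ, 0 ≤ t → t ≤ 1 → max (y - t) 0 ≤ a + t * (b - a) := by
    intro t h0 h1
    have hay : y ≤ a := le_max_left _ _
    have ha0 : (0:ℝ) ≤ a := le_max_right _ _
    have hby : y - 1 ≤ b := le_max_left _ _
    have hb0 : (0:ℝ) ≤ b := le_max_right _ _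
    apply max_le
    · nlinarith
    · nlinarith
  -- E[(y-ψ)⁺] ≤ a + E[ψ](b-a)
  have h2 : ∫ ω, max (y - ψ ω) 0 ∂P₂ ≤ ∫ ω, (a + ψ ω * (b - a)) ∂P₂ := by
    apply integral_mono_ae _ hg2int
    · filter_upwards [hψ01] with ω hω
      exact key _ hω.1 hω.2
    · refine ⟨((measurable_const.sub hψm).max measurable_const).aestronglyMeasurable, ?_⟩
      apply MeasureTheory.HasFiniteIntegral.of_bounded (C := a)
      filter_upwards [hψ01] with ω hω
      rw [Real.norm_eq_abs, abs_le]
      constructor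
      · have : (0:ℝ) ≤ max (y - ψ ω) 0 := le_max_right _ _
        linarith [le_max_right y (0:ℝ)]
      · apply max_le _ (le_max_right _ _)
        have := le_max_left y (0:ℝ)
        linarith [hω.1]
  -- E[(y-Y)⁺] = a + E[Y](b-a)
  have h1 : ∫ ω, max (y - Y ω) 0 ∂P₁ = ∫ ω, (a + Y ω * (b - a)) ∂P₁ := by
    apply integral_congr_ae
    filter_upwards [hY01] with ω hω
    rcases hω with h | h <;> rw [h] <;> simp [ha, hb]
  rw [h1]
  refine h2.trans (le_of_eq ?_)
  rw [integral_add (integrable_const a) (hψint.mul_const _),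
      integral_add (integrable_const a) (hYint.mul_const _),
      integral_mul_const, integral_mul_const, hmean]
  simp
end

section
/- Let V, η, ε be mutually independent real random variables on a common probability space, with V square-integrable, η Gaussian with mean 0 and variance σ_η² ≥ 0, and ε Gaussian with mean 0 and variance σ_ε² ≥ 0. Define ψ = V + η and Y = V + ε. Then the pair of distributions of Y and ψ satisfies H₀ (equivalently, E[Y] = E[ψ] and E[(y − Y)⁺] ≥ E[(y − ψ)⁺] for all y ∈ ℝ) if and only if σ_η² ≤ σ_ε². -/
open MeasureTheory ProbabilityTheory Real

namespace GaussH0Aux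


lemma gd1 : (gaussianReal 0 1 : Measure ℝ) = volume.withDensity (gaussianPDF 0 1) :=
  gaussianReal_of_var_ne_zero 0 one_ne_zero

lemma pdf_eq (x : ℝ) : gaussianPDFReal 0 1 x = (Real.sqrt (2 * π))⁻¹ * Real.exp (-(1/2) * x ^ 2) := by
  rw [gaussianPDFReal]
  norm_num
  left; ring

lemma g1_int_aux {g : ℝ → ℝ} (hg : Measurable g)
    (h : Integrable (fun x => g x * gaussianPDFReal 0 1 x) volume) :
    Integrable g (gaussianReal 0 1) := by
  rw [gd1, integrable_withDensity_iff (measurable_gaussianPDF 0 1)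
    (ae_of_all _ fun x => ENNReal.ofReal_lt_top)]
  refine h.congr (ae_of_all _ fun x => ?_)
  simp only [gaussianPDF, ENNReal.toReal_ofReal (gaussianPDFReal_nonneg 0 1 x)]

lemma g1_int_id : Integrable (fun z => z) (gaussianReal 0 1) := by
  refine g1_int_aux measurable_id ?_
  have := (integrable_mul_exp_neg_mul_sq (b := 1/2) (by norm_num)).const_mul (Real.sqrt (2 * π))⁻¹
  refine this.congr (ae_of_all _ fun x => ?_)
  simp only [pdf_eq]; ring

lemma g1_int_sq : Integrable (fun z => z ^ 2) (gaussianReal 0 1) := by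
  refine g1_int_aux (measurable_id.pow_const 2) ?_
  have hint := (integrable_exp_neg_mul_sq (b := 1/4) (by norm_num)).const_mul
      ((Real.sqrt (2 * π))⁻¹ * 4)
  refine hint.mono' ?_ (ae_of_all _ fun x => ?_)
  · exact ((measurable_id.pow_const 2).mul (measurable_gaussianPDFReal 0 1)).aestronglyMeasurable
  · rw [Real.norm_eq_abs, pdf_eq]
    have h1 : x ^ 2 ≤ 4 * Real.exp ((1/4) * x ^ 2) := by
      have := Real.add_one_le_exp ((1/4) * x ^ 2)
      nlinarith [sq_nonneg x, Real.exp_pos ((1/4) * x^2)]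
    have h2 : (0:ℝ) < (Real.sqrt (2 * π))⁻¹ := by
      rw [inv_pos]; exact Real.sqrt_pos.2 (by positivity)
    rw [abs_of_nonneg (by positivity)]
    calc x ^ 2 * ((Real.sqrt (2*π))⁻¹ * Real.exp (-(1/2) * x ^ 2))
        ≤ (4 * Real.exp ((1/4) * x ^ 2)) * ((Real.sqrt (2*π))⁻¹ * Real.exp (-(1/2) * x ^ 2)) := by
          apply mul_le_mul_of_nonneg_right h1 (by positivity)
      _ = Real.exp ((1/4) * x ^ 2) * Real.exp (-(1/2) * x ^ 2) * (4 * (Real.sqrt (2*π))⁻¹) := by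
          ring
      _ = (Real.sqrt (2*π))⁻¹ * 4 * Real.exp (-(1/4) * x ^ 2) := by
          rw [← Real.exp_add]; ring_nf



lemma g_map_neg (v : NNReal) :
    (gaussianReal 0 v).map (fun x => -x) = gaussianReal 0 v := by
  have h : (fun x : ℝ => -x) = (fun x : ℝ => (-1 : ℝ) * x) := by funext x; ring
  rw [h, gaussianReal_map_const_mul]
  norm_num

lemma g_scale (v : NNReal) :
    (gaussianReal 0 1).map (fun z => Real.sqrt v * z) = gaussianReal 0 v := by
  have h := gaussianReal_map_const_mul (μ := 0) (v := 1) (Real.sqrt v)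
  rw [mul_zero] at h
  have h2 : (⟨(Real.sqrt v)^2, sq_nonneg _⟩ : NNReal) * 1 = v := by
    rw [mul_one]
    exact Subtype.ext (Real.sq_sqrt (NNReal.coe_nonneg v))
  convert h using 2
  ext
  simp [Real.sq_sqrt (NNReal.coe_nonneg v)]

lemma integral_g_scale (v : NNReal) {f : ℝ → ℝ}
    (hf : AEStronglyMeasurable f (gaussianReal 0 v)) :
    ∫ x, f x ∂(gaussianReal 0 v) = ∫ z, f (Real.sqrt v * z) ∂(gaussianReal 0 1) := by
  rw [← g_scale v] at hf ⊢
  exact integral_map (measurable_const_mul _).aemeasurable hf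

lemma integrable_g_scale (v : NNReal) {f : ℝ → ℝ} (hf : AEStronglyMeasurable f (gaussianReal 0 v)) :
    Integrable f (gaussianReal 0 v) ↔
      Integrable (fun z => f (Real.sqrt v * z)) (gaussianReal 0 1) := by
  rw [← g_scale v] at hf ⊢
  exact integrable_map_measure hf (measurable_const_mul _).aemeasurable

lemma g_int_id (v : NNReal) : Integrable (fun z => z) (gaussianReal 0 v) :=
  (integrable_g_scale (f := fun z : ℝ => z) v measurable_id.aestronglyMeasurable).2
    (g1_int_id.const_mul _)

lemma g_int_sq (v : NNReal) : Integrable (fun z => z ^ 2) (gaussianReal 0 v) := by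
  refine (integrable_g_scale (f := fun z : ℝ => z ^ 2) v
    (measurable_id.pow_const 2).aestronglyMeasurable).2 ?_
  have := g1_int_sq.const_mul ((Real.sqrt v) ^ 2)
  refine this.congr (ae_of_all _ fun z => ?_)
  ring

lemma integral_neg_map {f : ℝ → ℝ} (v : NNReal) (hf : AEStronglyMeasurable f (gaussianReal 0 v)) :
    ∫ x, f x ∂(gaussianReal 0 v) = ∫ x, f (-x) ∂(gaussianReal 0 v) := by
  conv_lhs => rw [← g_map_neg v]
  rw [← g_map_neg v] at hf
  exact integral_map measurable_neg.aemeasurable hf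

lemma g_integral_id (v : NNReal) : ∫ z, z ∂(gaussianReal 0 v) = 0 := by
  have h := integral_neg_map (f := fun x : ℝ => x) v measurable_id.aestronglyMeasurable
  rw [integral_neg] at h
  linarith

lemma g_integral_sq (v : NNReal) :
    ∫ z, z ^ 2 ∂(gaussianReal 0 v) = v * ∫ z, z ^ 2 ∂(gaussianReal 0 1) := by
  rw [integral_g_scale (f := fun z : ℝ => z ^ 2) v
    (measurable_id.pow_const 2).aestronglyMeasurable, ← integral_const_mul]
  congr 1
  funext z
  rw [mul_pow, Real.sq_sqrt (NNReal.coe_nonneg v)]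

lemma m2_pos : 0 < ∫ z, z ^ 2 ∂(gaussianReal 0 1) := by
  rw [integral_pos_iff_support_of_nonneg (fun z => sq_nonneg z) g1_int_sq]
  have hsupp : (Function.support fun z : ℝ => z ^ 2) = {0}ᶜ := by
    ext z; simp [Function.mem_support, pow_eq_zero_iff]
  rw [hsupp]
  have h0 : gaussianReal 0 1 {0} = 0 :=
    gaussianReal_absolutelyContinuous 0 one_ne_zero (measure_singleton 0)
  rw [measure_compl (measurableSet_singleton 0) (measure_ne_top _ _), h0]
  simp



lemma abs_sub_add_abs_add (c u : ℝ) : |c - u| + |c + u| = 2 * max |c| |u| := by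
  rcases le_total |c| |u| with h|h
  · rw [max_eq_right h]
    rcases le_total u 0 with hu|hu
    · rw [abs_of_nonpos hu] at h ⊢
      have := abs_le.1 h
      rw [abs_of_nonneg (by linarith), abs_of_nonpos (by linarith)]; ring
    · rw [abs_of_nonneg hu] at h ⊢
      have := abs_le.1 h
      rw [abs_of_nonpos (by linarith), abs_of_nonneg (by linarith)]; ring
  · rw [max_eq_left h]
    rcases le_total c 0 with hc|hc
    · rw [abs_of_nonpos hc] at h ⊢
      have := abs_le.1 h
      rw [abs_of_nonpos (by linarith), abs_of_nonpos (by linarith)]; ring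
    · rw [abs_of_nonneg hc] at h ⊢
      have := abs_le.1 h
      rw [abs_of_nonneg (by linarith), abs_of_nonneg (by linarith)]; ring

lemma max_zero_eq (a : ℝ) : max a 0 = (a + |a|) / 2 := by
  rcases le_total a 0 with h|h
  · rw [max_eq_right h, abs_of_nonpos h]; ring
  · rw [max_eq_left h, abs_of_nonneg h]; ring

lemma put_sum_eq (c u : ℝ) : max (c - u) 0 + max (c + u) 0 = c + max |c| |u| := by
  rw [max_zero_eq, max_zero_eq]
  have := abs_sub_add_abs_add c u
  linarith

lemma put_sym_mono (c z : ℝ) {s t : ℝ} (hs : 0 ≤ s) (hst : s ≤ t) :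
    max (c - s * z) 0 + max (c + s * z) 0 ≤ max (c - t * z) 0 + max (c + t * z) 0 := by
  rw [put_sum_eq, put_sum_eq]
  have h : |s * z| ≤ |t * z| := by
    rw [abs_mul, abs_mul, abs_of_nonneg hs, abs_of_nonneg (hs.trans hst)]
    exact mul_le_mul_of_nonneg_right hst (abs_nonneg z)
  exact add_le_add_right (max_le_max le_rfl h) c

lemma int_put_lin (v : NNReal) (c s : ℝ) :
    Integrable (fun z => max (c - s * z) 0) (gaussianReal 0 v) := by
  have hb : Integrable (fun z : ℝ => |c| + |s| * |z|) (gaussianReal 0 v) :=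
    (integrable_const _).add (((g_int_id v).abs).const_mul _)
  refine hb.mono' ?_ (ae_of_all _ fun z => ?_)
  · exact ((measurable_const.sub (measurable_id.const_mul s)).max
      measurable_const).aestronglyMeasurable
  · rw [Real.norm_eq_abs, abs_of_nonneg (le_max_right _ _)]
    calc max (c - s * z) 0 ≤ |c - s * z| := max_le (le_abs_self _) (abs_nonneg _)
      _ ≤ |c| + |s * z| := abs_sub _ _
      _ = |c| + |s| * |z| := by rw [abs_mul]

lemma int_put (v : NNReal) (c : ℝ) :
    Integrable (fun b => max (c - b) 0) (gaussianReal 0 v) := by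
  have := int_put_lin v c 1
  simpa using this

lemma put_mono {v w : NNReal} (hvw : v ≤ w) (c : ℝ) :
    ∫ b, max (c - b) 0 ∂(gaussianReal 0 v) ≤ ∫ b, max (c - b) 0 ∂(gaussianReal 0 w) := by
  have hmeas : ∀ (s : ℝ) (u : NNReal), AEStronglyMeasurable (fun z : ℝ => max (c - s * z) 0)
      (gaussianReal 0 u) := fun s u =>
    ((measurable_const.sub (measurable_id.const_mul s)).max measurable_const).aestronglyMeasurable
  -- scaling
  have hscale : ∀ u : NNReal, ∫ b, max (c - b) 0 ∂(gaussianReal 0 u)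
      = ∫ z, max (c - Real.sqrt u * z) 0 ∂(gaussianReal 0 1) := by
    intro u
    exact integral_g_scale u (f := fun b => max (c - b) 0)
      ((measurable_const.sub measurable_id).max measurable_const).aestronglyMeasurable
  -- symmetrization
  have hsym : ∀ s : ℝ, ∫ z, max (c - s * z) 0 ∂(gaussianReal 0 1)
      = ∫ z, max (c + s * z) 0 ∂(gaussianReal 0 1) := by
    intro s
    have := integral_neg_map (f := fun z => max (c - s * z) 0) 1 (hmeas s 1)
    rw [this]
    congr 1
    funext z
    ring_nf
  have key : ∀ s t : ℝ, 0 ≤ s → s ≤ t →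
      ∫ z, max (c - s * z) 0 ∂(gaussianReal 0 1) ≤ ∫ z, max (c - t * z) 0 ∂(gaussianReal 0 1) := by
    intro s t hs hst
    have h2 : (2:ℝ) * ∫ z, max (c - s * z) 0 ∂(gaussianReal 0 1)
        = ∫ z, (max (c - s * z) 0 + max (c + s * z) 0) ∂(gaussianReal 0 1) := by
      rw [integral_add (int_put_lin 1 c s) ?_]
      · rw [hsym]; ring
      · have := int_put_lin 1 c (-s)
        refine this.congr (ae_of_all _ fun z => ?_)
        ring_nf
    have h3 : (2:ℝ) * ∫ z, max (c - t * z) 0 ∂(gaussianReal 0 1)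
        = ∫ z, (max (c - t * z) 0 + max (c + t * z) 0) ∂(gaussianReal 0 1) := by
      rw [integral_add (int_put_lin 1 c t) ?_]
      · rw [hsym]; ring
      · have := int_put_lin 1 c (-t)
        refine this.congr (ae_of_all _ fun z => ?_)
        ring_nf
    have h4 : ∫ z, (max (c - s * z) 0 + max (c + s * z) 0) ∂(gaussianReal 0 1)
        ≤ ∫ z, (max (c - t * z) 0 + max (c + t * z) 0) ∂(gaussianReal 0 1) := by
      refine integral_mono ?_ ?_ (fun z => put_sym_mono c z hs hst)
      · exact (int_put_lin 1 c s).add ((int_put_lin 1 c (-s)).congr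
          (ae_of_all _ fun z => by ring_nf))
      · exact (int_put_lin 1 c t).add ((int_put_lin 1 c (-t)).congr
          (ae_of_all _ fun z => by ring_nf))
    linarith
  rw [hscale v, hscale w]
  exact key _ _ (Real.sqrt_nonneg _) (Real.sqrt_le_sqrt (NNReal.coe_le_coe.2 hvw))



section Fubini
variable {Ω : Type*} [MeasurableSpace Ω] (P : Measure Ω) [IsProbabilityMeasure P]

lemma integral_add_indep {X W : Ω → ℝ} (hX : Measurable X) (hW : Measurable W)
    (hI : IndepFun X W P) {f : ℝ → ℝ} (hf : Measurable f)
    (hint : Integrable (fun ω => f (X ω + W ω)) P) :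
    ∫ ω, f (X ω + W ω) ∂P = ∫ a, ∫ b, f (a + b) ∂(P.map W) ∂(P.map X) := by
  have hmap : P.map (fun ω => (X ω, W ω)) = (P.map X).prod (P.map W) :=
    (indepFun_iff_map_prod_eq_prod_map_map hX.aemeasurable hW.aemeasurable).1 hI
  have hmeas : AEStronglyMeasurable (fun p : ℝ × ℝ => f (p.1 + p.2))
      (P.map (fun ω => (X ω, W ω))) :=
    (hf.comp (measurable_fst.add measurable_snd)).aestronglyMeasurable
  have h1 : ∫ ω, f (X ω + W ω) ∂P
      = ∫ p : ℝ × ℝ, f (p.1 + p.2) ∂(P.map (fun ω => (X ω, W ω))) :=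
    (integral_map (hX.prodMk hW).aemeasurable hmeas).symm
  have hint2 : Integrable (fun p : ℝ × ℝ => f (p.1 + p.2)) ((P.map X).prod (P.map W)) := by
    rw [← hmap, integrable_map_measure hmeas (hX.prodMk hW).aemeasurable]
    exact hint
  rw [h1, hmap]
  exact integral_prod _ hint2

lemma integrable_inner_indep {X W : Ω → ℝ} (hX : Measurable X) (hW : Measurable W)
    (hI : IndepFun X W P) {f : ℝ → ℝ} (hf : Measurable f)
    (hint : Integrable (fun ω => f (X ω + W ω)) P) :
    Integrable (fun a => ∫ b, f (a + b) ∂(P.map W)) (P.map X) := by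
  have hmap : P.map (fun ω => (X ω, W ω)) = (P.map X).prod (P.map W) :=
    (indepFun_iff_map_prod_eq_prod_map_map hX.aemeasurable hW.aemeasurable).1 hI
  have hmeas : AEStronglyMeasurable (fun p : ℝ × ℝ => f (p.1 + p.2))
      (P.map (fun ω => (X ω, W ω))) :=
    (hf.comp (measurable_fst.add measurable_snd)).aestronglyMeasurable
  have hint2 : Integrable (fun p : ℝ × ℝ => f (p.1 + p.2)) ((P.map X).prod (P.map W)) := by
    rw [← hmap, integrable_map_measure hmeas (hX.prodMk hW).aemeasurable]
    exact hint
  exact hint2.integral_prod_left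

end Fubini

section Fwd
variable {Ω : Type*} [MeasurableSpace Ω] (P : Measure Ω) [IsProbabilityMeasure P]

-- integrability of a gaussian-distributed rv
lemma int_of_gauss {W : Ω → ℝ} (hWm : Measurable W) {v : NNReal}
    (hW : P.map W = gaussianReal 0 v) : Integrable W P := by
  have h := (integrable_map_measure (μ := P) (f := W) (g := fun z : ℝ => z)
    measurable_id.aestronglyMeasurable hWm.aemeasurable).1
  rw [hW] at h
  exact h (g_int_id v)

lemma integral_of_gauss {W : Ω → ℝ} (hWm : Measurable W) {v : NNReal}
    (hW : P.map W = gaussianReal 0 v) : ∫ ω, W ω ∂P = 0 := by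
  have h := integral_map (μ := P) (φ := W) (f := fun z : ℝ => z) hWm.aemeasurable
    measurable_id.aestronglyMeasurable
  rw [hW, g_integral_id v] at h
  exact h.symm

lemma int_put_rv {X : Ω → ℝ} (hXm : Measurable X) (hXint : Integrable X P) (y : ℝ) :
    Integrable (fun ω => max (y - X ω) 0) P := by
  refine ((integrable_const |y|).add hXint.abs).mono'
    ((measurable_const.sub hXm).max measurable_const).aestronglyMeasurable
    (ae_of_all _ fun ω => ?_)
  rw [Real.norm_eq_abs, abs_of_nonneg (le_max_right _ _)]
  calc max (y - X ω) 0 ≤ |y - X ω| := max_le (le_abs_self _) (abs_nonneg _)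
    _ ≤ |y| + |X ω| := abs_sub _ _

lemma fwd_put {V W W' : Ω → ℝ} (hVm : Measurable V) (hWm : Measurable W) (hW'm : Measurable W')
    (hIW : IndepFun V W P) (hIW' : IndepFun V W' P)
    (hVint : Integrable V P) {v w : NNReal} (hvw : v ≤ w)
    (hW : P.map W = gaussianReal 0 v) (hW' : P.map W' = gaussianReal 0 w) (y : ℝ) :
    ∫ ω, max (y - (V ω + W ω)) 0 ∂P ≤ ∫ ω, max (y - (V ω + W' ω)) 0 ∂P := by
  have hfm : Measurable (fun x : ℝ => max (y - x) 0) :=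
    (measurable_const.sub measurable_id).max measurable_const
  have hWint := int_of_gauss P hWm hW
  have hW'int := int_of_gauss P hW'm hW'
  have hint1 : Integrable (fun ω => max (y - (V ω + W ω)) 0) P :=
    int_put_rv P (hVm.add hWm) (hVint.add hWint) y
  have hint2 : Integrable (fun ω => max (y - (V ω + W' ω)) 0) P :=
    int_put_rv P (hVm.add hW'm) (hVint.add hW'int) y
  rw [integral_add_indep P hVm hWm hIW hfm hint1,
      integral_add_indep P hVm hW'm hIW' hfm hint2]
  refine integral_mono (integrable_inner_indep P hVm hWm hIW hfm hint1)
    (integrable_inner_indep P hVm hW'm hIW' hfm hint2) (fun a => ?_)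
  rw [hW, hW']
  have h1 : ∀ b : ℝ, y - (a + b) = (y - a) - b := fun b => by ring
  simp only [h1]
  exact put_mono hvw (y - a)
end Fwd


lemma put_integral_Ioi (x : ℝ) :
    ∫ y in Set.Ioi (0:ℝ), max (x - y) 0 = max x 0 ^ 2 / 2 := by
  have hEq : Set.EqOn (fun y => max (x - y) 0) ((Set.Ioc 0 x).indicator (fun y => x - y))
      (Set.Ioi 0) := by
    intro y hy
    simp only [Set.mem_Ioi] at hy
    by_cases h : y ∈ Set.Ioc 0 x
    · rw [Set.indicator_of_mem h]
      exact max_eq_left (by linarith [h.2])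
    · rw [Set.indicator_of_notMem h]
      have : x < y := by
        by_contra hxy
        exact h ⟨hy, le_of_not_gt hxy⟩
      exact max_eq_right (by linarith)
  rw [setIntegral_congr_fun measurableSet_Ioi hEq,
    setIntegral_indicator measurableSet_Ioc,
    Set.inter_eq_self_of_subset_right Set.Ioc_subset_Ioi_self]
  rcases le_total x 0 with hx|hx
  · rw [Set.Ioc_eq_empty (by simpa using hx), max_eq_right hx]
    simp
  · rw [← intervalIntegral.integral_of_le hx, max_eq_left hx,
      intervalIntegral.integral_sub intervalIntegrable_const intervalIntegral.intervalIntegrable_id,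
      intervalIntegral.integral_const, integral_id]
    simp
    ring

lemma intOn_put_Ioi (x : ℝ) :
    IntegrableOn (fun y => max (x - y) 0) (Set.Ioi (0:ℝ)) volume := by
  have hEq : Set.EqOn ((Set.Ioc 0 x).indicator (fun y => x - y)) (fun y => max (x - y) 0)
      (Set.Ioi 0) := by
    intro y hy
    by_cases h : y ∈ Set.Ioc 0 x
    · rw [Set.indicator_of_mem h]
      exact (max_eq_left (by linarith [h.2])).symm
    · rw [Set.indicator_of_notMem h]
      simp only [Set.mem_Ioi] at hy
      have : x < y := by
        by_contra hxy
        exact h ⟨hy, le_of_not_gt hxy⟩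
      exact (max_eq_right (by linarith)).symm
  have hint : IntegrableOn (fun y : ℝ => x - y) (Set.Ioc 0 x) volume :=
    (continuous_const.sub continuous_id).integrableOn_Ioc
  exact IntegrableOn.congr_fun
    ((hint.integrable_indicator measurableSet_Ioc).integrableOn) hEq measurableSet_Ioi

lemma lint_put_Ioi (x : ℝ) :
    ∫⁻ y in Set.Ioi (0:ℝ), ENNReal.ofReal (max (x - y) 0)
      = ENNReal.ofReal (max x 0 ^ 2 / 2) := by
  rw [← put_integral_Ioi x]
  exact (ofReal_integral_eq_lintegral_ofReal (intOn_put_Ioi x)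
    (ae_of_all _ fun y => le_max_right _ _)).symm

section Swap
variable {Ω : Type*} [MeasurableSpace Ω] (P : Measure Ω) [IsProbabilityMeasure P]

lemma swap_put {X : Ω → ℝ} (hXm : Measurable X) :
    ∫⁻ ω, ENNReal.ofReal (max (X ω) 0 ^ 2 / 2) ∂P
      = ∫⁻ y in Set.Ioi (0:ℝ), ∫⁻ ω, ENNReal.ofReal (max (X ω - y) 0) ∂P ∂volume := by
  have h1 : ∫⁻ ω, ENNReal.ofReal (max (X ω) 0 ^ 2 / 2) ∂P
      = ∫⁻ ω, ∫⁻ y in Set.Ioi (0:ℝ), ENNReal.ofReal (max (X ω - y) 0) ∂volume ∂P :=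
    lintegral_congr fun ω => (lint_put_Ioi (X ω)).symm
  rw [h1]
  exact lintegral_lintegral_swap
    ((((hXm.comp measurable_fst).sub measurable_snd).max measurable_const).ennreal_ofReal.aemeasurable)

lemma sq_pos_part_le {X X' : Ω → ℝ} (hXm : Measurable X) (hX'm : Measurable X')
    (hXint : ∀ y : ℝ, Integrable (fun ω => max (X ω - y) 0) P)
    (hX'int : ∀ y : ℝ, Integrable (fun ω => max (X' ω - y) 0) P)
    (hsq : Integrable (fun ω => max (X ω) 0 ^ 2) P)
    (hsq' : Integrable (fun ω => max (X' ω) 0 ^ 2) P)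
    (hle : ∀ y : ℝ, 0 < y → ∫ ω, max (X ω - y) 0 ∂P ≤ ∫ ω, max (X' ω - y) 0 ∂P) :
    ∫ ω, max (X ω) 0 ^ 2 ∂P ≤ ∫ ω, max (X' ω) 0 ^ 2 ∂P := by
  have key : ∫⁻ ω, ENNReal.ofReal (max (X ω) 0 ^ 2 / 2) ∂P
      ≤ ∫⁻ ω, ENNReal.ofReal (max (X' ω) 0 ^ 2 / 2) ∂P := by
    rw [swap_put P hXm, swap_put P hX'm]
    refine lintegral_mono_ae ((ae_restrict_iff' measurableSet_Ioi).2 (ae_of_all _ fun y hy => ?_))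
    have h1 : ENNReal.ofReal (∫ ω, max (X ω - y) 0 ∂P)
        = ∫⁻ ω, ENNReal.ofReal (max (X ω - y) 0) ∂P :=
      ofReal_integral_eq_lintegral_ofReal (hXint y) (ae_of_all _ fun ω => le_max_right _ _)
    have h2 : ENNReal.ofReal (∫ ω, max (X' ω - y) 0 ∂P)
        = ∫⁻ ω, ENNReal.ofReal (max (X' ω - y) 0) ∂P :=
      ofReal_integral_eq_lintegral_ofReal (hX'int y) (ae_of_all _ fun ω => le_max_right _ _)
    rw [← h1, ← h2]
    exact ENNReal.ofReal_le_ofReal (hle y hy)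
  have e1 : ENNReal.ofReal (∫ ω, max (X ω) 0 ^ 2 / 2 ∂P)
      = ∫⁻ ω, ENNReal.ofReal (max (X ω) 0 ^ 2 / 2) ∂P :=
    ofReal_integral_eq_lintegral_ofReal (hsq.div_const 2)
      (ae_of_all _ fun ω => by positivity)
  have e2 : ENNReal.ofReal (∫ ω, max (X' ω) 0 ^ 2 / 2 ∂P)
      = ∫⁻ ω, ENNReal.ofReal (max (X' ω) 0 ^ 2 / 2) ∂P :=
    ofReal_integral_eq_lintegral_ofReal (hsq'.div_const 2)
      (ae_of_all _ fun ω => by positivity)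
  rw [← e1, ← e2] at key
  have h3 := (ENNReal.ofReal_le_ofReal_iff
    (integral_nonneg fun ω => by positivity)).1 key
  rw [integral_div, integral_div] at h3
  linarith
end Swap

end GaussH0Aux

open GaussH0Aux

open MeasureTheory ProbabilityTheory

/-- If `ψ = V + η` and `Y = V + ε` with `V, η, ε` mutually independent, `V` square-integrable,
`η ∼ N(0, σ_η²)` and `ε ∼ N(0, σ_ε²)`, then the pair of distributions of `Y` and `ψ`
satisfies H₀ (equivalently, `E[Y] = E[ψ]` and `E[(y - Y)⁺] ≥ E[(y - ψ)⁺]` for all `y`)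
if and only if `σ_η² ≤ σ_ε²`. -/
theorem gaussian_deviation_H0_iff_variance_le
    {Ω : Type*} [MeasurableSpace Ω] (P : Measure Ω) [IsProbabilityMeasure P]
    {V η ε : Ω → ℝ}
    (hVm : Measurable V) (hηm : Measurable η) (hεm : Measurable ε)
    (hindep : iIndepFun ![V, η, ε] P)
    (hV2 : MemLp V 2 P)
    (vη vε : NNReal)
    (hη : P.map η = gaussianReal 0 vη)
    (hε : P.map ε = gaussianReal 0 vε) :
    ((∫ ω, (V ω + ε ω) ∂P = ∫ ω, (V ω + η ω) ∂P) ∧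
        ∀ y : ℝ, ∫ ω, max (y - (V ω + η ω)) 0 ∂P ≤ ∫ ω, max (y - (V ω + ε ω)) 0 ∂P) ↔
      vη ≤ vε := by
  have hIVη : IndepFun V η P := by
    have := hindep.indepFun (i := 0) (j := 1) (by decide)
    simpa using this
  have hIVε : IndepFun V ε P := by
    have := hindep.indepFun (i := 0) (j := 2) (by decide)
    simpa using this
  have hVint : Integrable V P := hV2.integrable one_le_two
  have hηint : Integrable η P := int_of_gauss P hηm hη
  have hεint : Integrable ε P := int_of_gauss P hεm hε
  have hηzero : ∫ ω, η ω ∂P = 0 := integral_of_gauss P hηm hη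
  have hεzero : ∫ ω, ε ω ∂P = 0 := integral_of_gauss P hεm hε
  have hmean : ∫ ω, (V ω + ε ω) ∂P = ∫ ω, (V ω + η ω) ∂P := by
    rw [integral_add hVint hεint, integral_add hVint hηint, hηzero, hεzero]
  constructor
  · rintro ⟨hm, hput⟩
    -- second moments
    have hη2 : MemLp η 2 P := by
      have h1 : MemLp (fun z : ℝ => z) 2 (gaussianReal 0 vη) :=
        (memLp_two_iff_integrable_sq measurable_id.aestronglyMeasurable).2 (g_int_sq vη)
      rw [← hη] at h1
      have := (memLp_map_measure_iff (f := η) (g := fun z : ℝ => z)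
        measurable_id.aestronglyMeasurable hηm.aemeasurable).1 h1
      exact this
    have hε2 : MemLp ε 2 P := by
      have h1 : MemLp (fun z : ℝ => z) 2 (gaussianReal 0 vε) :=
        (memLp_two_iff_integrable_sq measurable_id.aestronglyMeasurable).2 (g_int_sq vε)
      rw [← hε] at h1
      have := (memLp_map_measure_iff (f := ε) (g := fun z : ℝ => z)
        measurable_id.aestronglyMeasurable hεm.aemeasurable).1 h1
      exact this
    have hψ2 : MemLp (fun ω => V ω + η ω) 2 P := hV2.add hη2
    have hY2 : MemLp (fun ω => V ω + ε ω) 2 P := hV2.add hε2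
    have hψsq : Integrable (fun ω => (V ω + η ω) ^ 2) P :=
      (memLp_two_iff_integrable_sq hψ2.aestronglyMeasurable).1 hψ2
    have hYsq : Integrable (fun ω => (V ω + ε ω) ^ 2) P :=
      (memLp_two_iff_integrable_sq hY2.aestronglyMeasurable).1 hY2
    have hψm : Measurable (fun ω => V ω + η ω) := hVm.add hηm
    have hYm : Measurable (fun ω => V ω + ε ω) := hVm.add hεm
    have hψint : Integrable (fun ω => V ω + η ω) P := hVint.add hηint
    have hYint : Integrable (fun ω => V ω + ε ω) P := hVint.add hεint
    -- integrability of calls and puts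
    have int_call : ∀ (X : Ω → ℝ), Measurable X → Integrable X P → ∀ y : ℝ,
        Integrable (fun ω => max (X ω - y) 0) P := by
      intro X hXm hXint y
      refine (hXint.abs.add (integrable_const |y|)).mono'
        ((hXm.sub measurable_const).max measurable_const).aestronglyMeasurable
        (ae_of_all _ fun ω => ?_)
      rw [Real.norm_eq_abs, abs_of_nonneg (le_max_right _ _)]
      calc max (X ω - y) 0 ≤ |X ω - y| := max_le (le_abs_self _) (abs_nonneg _)
        _ ≤ |X ω| + |y| := abs_sub _ _
    -- call inequality from put inequality plus equal means
    have call_parity : ∀ (X : Ω → ℝ), Measurable X → Integrable X P → ∀ y : ℝ,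
        ∫ ω, max (X ω - y) 0 ∂P = (∫ ω, max (y - X ω) 0 ∂P) + (∫ ω, X ω ∂P) - y := by
      intro X hXm hXint y
      have hpt : ∀ ω, max (X ω - y) 0 = max (y - X ω) 0 + (X ω - y) := by
        intro ω
        rcases le_total (X ω) y with h|h
        · rw [max_eq_right (by linarith : X ω - y ≤ 0),
            max_eq_left (by linarith : 0 ≤ y - X ω)]; ring
        · rw [max_eq_left (by linarith : 0 ≤ X ω - y),
            max_eq_right (by linarith : y - X ω ≤ 0)]; ring
      calc ∫ ω, max (X ω - y) 0 ∂P
          = ∫ ω, (max (y - X ω) 0 + (X ω - y)) ∂P := by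
            exact integral_congr_ae (ae_of_all _ hpt)
        _ = (∫ ω, max (y - X ω) 0 ∂P) + ∫ ω, (X ω - y) ∂P :=
            integral_add (int_put_rv P hXm hXint y) (hXint.sub (integrable_const y))
        _ = (∫ ω, max (y - X ω) 0 ∂P) + (∫ ω, X ω ∂P) - y := by
            rw [integral_sub hXint (integrable_const y), integral_const]
            simp [measure_univ]
            ring
    have hcall : ∀ y : ℝ,
        ∫ ω, max ((V ω + η ω) - y) 0 ∂P ≤ ∫ ω, max ((V ω + ε ω) - y) 0 ∂P := by
      intro y
      rw [call_parity _ hψm hψint y, call_parity _ hYm hYint y, hm]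
      have := hput y
      linarith
    -- positive parts
    have hsqψp : Integrable (fun ω => max (V ω + η ω) 0 ^ 2) P := by
      refine hψsq.mono' ((hψm.max measurable_const).pow_const 2).aestronglyMeasurable
        (ae_of_all _ fun ω => ?_)
      rw [Real.norm_eq_abs, abs_of_nonneg (pow_nonneg (le_max_right _ _) 2)]
      rcases le_total (V ω + η ω) 0 with h|h
      · rw [max_eq_right h]; simpa using sq_nonneg (V ω + η ω)
      · rw [max_eq_left h]
    have hsqYp : Integrable (fun ω => max (V ω + ε ω) 0 ^ 2) P := by
      refine hYsq.mono' ((hYm.max measurable_const).pow_const 2).aestronglyMeasurable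
        (ae_of_all _ fun ω => ?_)
      rw [Real.norm_eq_abs, abs_of_nonneg (pow_nonneg (le_max_right _ _) 2)]
      rcases le_total (V ω + ε ω) 0 with h|h
      · rw [max_eq_right h]; simpa using sq_nonneg (V ω + ε ω)
      · rw [max_eq_left h]
    have hsqψn : Integrable (fun ω => max (-(V ω + η ω)) 0 ^ 2) P := by
      refine hψsq.mono' (((hψm.neg).max measurable_const).pow_const 2).aestronglyMeasurable
        (ae_of_all _ fun ω => ?_)
      rw [Real.norm_eq_abs, abs_of_nonneg (pow_nonneg (le_max_right _ _) 2)]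
      rcases le_total (-(V ω + η ω)) 0 with h|h
      · rw [max_eq_right h]; simpa using sq_nonneg (V ω + η ω)
      · rw [max_eq_left h]; nlinarith
    have hsqYn : Integrable (fun ω => max (-(V ω + ε ω)) 0 ^ 2) P := by
      refine hYsq.mono' (((hYm.neg).max measurable_const).pow_const 2).aestronglyMeasurable
        (ae_of_all _ fun ω => ?_)
      rw [Real.norm_eq_abs, abs_of_nonneg (pow_nonneg (le_max_right _ _) 2)]
      rcases le_total (-(V ω + ε ω)) 0 with h|h
      · rw [max_eq_right h]; simpa using sq_nonneg (V ω + ε ω)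
      · rw [max_eq_left h]; nlinarith
    have hpos : ∫ ω, max (V ω + η ω) 0 ^ 2 ∂P ≤ ∫ ω, max (V ω + ε ω) 0 ^ 2 ∂P :=
      sq_pos_part_le P hψm hYm (int_call _ hψm hψint) (int_call _ hYm hYint)
        hsqψp hsqYp (fun y _ => hcall y)
    have hneg : ∫ ω, max (-(V ω + η ω)) 0 ^ 2 ∂P ≤ ∫ ω, max (-(V ω + ε ω)) 0 ^ 2 ∂P := by
      refine sq_pos_part_le P hψm.neg hYm.neg ?_ ?_ hsqψn hsqYn ?_
      · intro y
        have := int_put_rv P hψm hψint (-y)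
        refine this.congr (ae_of_all _ fun ω => ?_)
        congr 1
        ring
      · intro y
        have := int_put_rv P hYm hYint (-y)
        refine this.congr (ae_of_all _ fun ω => ?_)
        congr 1
        ring
      · intro y _
        have h := hput (-y)
        have e1 : ∀ ω, -(V ω + η ω) - y = (-y) - (V ω + η ω) := fun ω => by ring
        have e2 : ∀ ω, -(V ω + ε ω) - y = (-y) - (V ω + ε ω) := fun ω => by ring
        simp only [e1, e2]
        exact h
    -- combine: second moments
    have hsplit : ∀ (X : Ω → ℝ), Measurable X →
        Integrable (fun ω => max (X ω) 0 ^ 2) P →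
        Integrable (fun ω => max (-(X ω)) 0 ^ 2) P →
        ∫ ω, (X ω) ^ 2 ∂P
          = (∫ ω, max (X ω) 0 ^ 2 ∂P) + ∫ ω, max (-(X ω)) 0 ^ 2 ∂P := by
      intro X hXm h1 h2
      rw [← integral_add h1 h2]
      refine integral_congr_ae (ae_of_all _ fun ω => ?_)
      show X ω ^ 2 = max (X ω) 0 ^ 2 + max (-(X ω)) 0 ^ 2
      rcases le_total (X ω) 0 with h|h
      · rw [max_eq_right h, max_eq_left (by linarith : (0:ℝ) ≤ -(X ω))]; ring
      · rw [max_eq_left h, max_eq_right (by linarith : -(X ω) ≤ 0)]; ring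
    have hsq_le : ∫ ω, (V ω + η ω) ^ 2 ∂P ≤ ∫ ω, (V ω + ε ω) ^ 2 ∂P := by
      rw [hsplit _ hψm hsqψp hsqψn, hsplit _ hYm hsqYp hsqYn]
      linarith
    -- expand squares
    have hV2int : Integrable (fun ω => V ω ^ 2) P :=
      (memLp_two_iff_integrable_sq hV2.aestronglyMeasurable).1 hV2
    have hη2int : Integrable (fun ω => η ω ^ 2) P :=
      (memLp_two_iff_integrable_sq hη2.aestronglyMeasurable).1 hη2
    have hε2int : Integrable (fun ω => ε ω ^ 2) P :=
      (memLp_two_iff_integrable_sq hε2.aestronglyMeasurable).1 hε2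
    have hVηint : Integrable (fun ω => V ω * η ω) P := hIVη.integrable_mul hVint hηint
    have hVεint : Integrable (fun ω => V ω * ε ω) P := hIVε.integrable_mul hVint hεint
    have hVη : ∫ ω, V ω * η ω ∂P = 0 := by
      have h := hIVη.integral_fun_mul_eq_mul_integral hVint.aestronglyMeasurable hηint.aestronglyMeasurable
      rw [hηzero, mul_zero] at h
      exact h
    have hVε : ∫ ω, V ω * ε ω ∂P = 0 := by
      have h := hIVε.integral_fun_mul_eq_mul_integral hVint.aestronglyMeasurable hεint.aestronglyMeasurable
      rw [hεzero, mul_zero] at h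
      exact h
    have hexp : ∀ (W : Ω → ℝ), Measurable W → Integrable (fun ω => W ω ^ 2) P →
        Integrable (fun ω => V ω * W ω) P →
        ∫ ω, (V ω + W ω) ^ 2 ∂P
          = (∫ ω, V ω ^ 2 ∂P) + 2 * (∫ ω, V ω * W ω ∂P) + ∫ ω, W ω ^ 2 ∂P := by
      intro W hWm hW2 hVW
      have hpt : ∀ ω, (V ω + W ω) ^ 2 = V ω ^ 2 + (2 * (V ω * W ω) + W ω ^ 2) :=
        fun ω => by ring
      calc ∫ ω, (V ω + W ω) ^ 2 ∂P
          = ∫ ω, (V ω ^ 2 + (2 * (V ω * W ω) + W ω ^ 2)) ∂P :=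
            integral_congr_ae (ae_of_all _ hpt)
        _ = (∫ ω, V ω ^ 2 ∂P) + ((∫ ω, 2 * (V ω * W ω) ∂P) + ∫ ω, W ω ^ 2 ∂P) := by
            have h23 : Integrable (fun ω => 2 * (V ω * W ω) + W ω ^ 2) P :=
              (hVW.const_mul 2).add hW2
            rw [integral_add hV2int h23, integral_add (hVW.const_mul 2) hW2]
        _ = (∫ ω, V ω ^ 2 ∂P) + 2 * (∫ ω, V ω * W ω ∂P) + ∫ ω, W ω ^ 2 ∂P := by
            rw [integral_const_mul]
            ring
    have hη2val : ∫ ω, η ω ^ 2 ∂P = vη * ∫ z, z ^ 2 ∂(gaussianReal 0 1) := by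
      have h := integral_map (μ := P) (φ := η) (f := fun z : ℝ => z ^ 2) hηm.aemeasurable
        (measurable_id.pow_const 2).aestronglyMeasurable
      rw [hη, g_integral_sq vη] at h
      exact h.symm
    have hε2val : ∫ ω, ε ω ^ 2 ∂P = vε * ∫ z, z ^ 2 ∂(gaussianReal 0 1) := by
      have h := integral_map (μ := P) (φ := ε) (f := fun z : ℝ => z ^ 2) hεm.aemeasurable
        (measurable_id.pow_const 2).aestronglyMeasurable
      rw [hε, g_integral_sq vε] at h
      exact h.symm
    rw [hexp η hηm hη2int hVηint, hexp ε hεm hε2int hVεint, hVη, hVε,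
      hη2val, hε2val] at hsq_le
    have hfin : (vη : ℝ) * ∫ z, z ^ 2 ∂(gaussianReal 0 1)
        ≤ (vε : ℝ) * ∫ z, z ^ 2 ∂(gaussianReal 0 1) := by linarith
    have hco : (vη : ℝ) ≤ (vε : ℝ) := le_of_mul_le_mul_right hfin m2_pos
    exact NNReal.coe_le_coe.1 hco
  · intro hvw
    exact ⟨hmean, fun y => fwd_put P hVm hηm hεm hIVη hIVε hVint hvw hη hε y⟩
end
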